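/- arXiv:2211.00711 — 6 statements merged into one kernel-verified Lean document; each statement's English description precedes it below -/
import Mathlib

section
/- Let (R,σ) be an assignment for (G',v₀). If σ(v₀) ≠ ⊥, then Player 1 has a winning strategy in the game 𝒢(G',v₀), i.e. the initial position v₀ is a win for the player to move. -/
/-!
Setting: `G` is a finite simple graph on `V`, bipartite with bipartition `V₁, V₂`.
The graph `G'` is obtained from `G` by adding a new vertex `v₁` adjacent to every
vertex of `V₁`, and a new vertex `v₀` adjacent only to `v₁`.  The vertices of `G'`
are encoded by `Option (Option V)`: `none` is `v₀`, `some none` is `v₁`, and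
`some (some v)` is the vertex `v` of `G`.
-/

/-- The vertex set of `G'`. -/
abbrev Vext (V : Type) : Type := Option (Option V)

/-- The added vertex `v₀`. -/
def vzero {V : Type} : Vext V := none

/-- The added vertex `v₁`. -/
def vone {V : Type} : Vext V := some none

/-- The embedding of a vertex of `G` into `G'`. -/
def emb {V : Type} (v : V) : Vext V := some (some v)

/-- The graph `G'` obtained from `G` by adding `v₁` adjacent to every vertex of `V₁`
and `v₀` adjacent only to `v₁`. -/
def extGraph {V : Type} (G : SimpleGraph V) (V1 : Set V) : SimpleGraph (Vext V) where
  Adj x y :=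
    match x, y with
    | none, some none => True
    | some none, none => True
    | some none, some (some v) => v ∈ V1
    | some (some v), some none => v ∈ V1
    | some (some u), some (some v) => G.Adj u v
    | _, _ => False
  symm := by
    constructor
    rintro (_ | (_ | x)) (_ | (_ | y)) h <;>
      first
        | exact h
        | exact h.symm
        | exact h.elim
        | trivial
  loopless := by
    constructor
    rintro (_ | (_ | x)) h
    · exact h
    · exact h
    · exact G.loopless.irrefl x h

/-- `(R, σ)` is an assignment for `(G', x₀)`: here `σ x = none` encodes `σ(x) = ⊥`. -/
structure IsAssignment {W : Type} (G' : SimpleGraph W) (x0 : W) (R : Set W)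
    (σ : W → Option W) : Prop where
  /-- `x₀ ∈ R`. -/
  mem : x0 ∈ R
  /-- `(C₁)`: for `v ∈ R`, if `σ v = u ∈ V'` then `u` is adjacent to `v`, `u ∈ R` and
  `σ u = ⊥`. -/
  C1 : ∀ v ∈ R, ∀ u, σ v = some u → G'.Adj v u ∧ u ∈ R ∧ σ u = none
  /-- `(C₂)`: for `v ∈ R`, if `σ v = ⊥` then every neighbour `u` of `v` satisfies `u ∈ R`
  and `σ u ≠ ⊥`. -/
  C2 : ∀ v ∈ R, σ v = none → ∀ u, G'.Adj v u → u ∈ R ∧ σ u ≠ none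
  /-- `(C₃)`, first half: for `v ∈ R`, `|σ⁻¹(v)| ≤ 1`. -/
  C3 : ∀ v ∈ R, {w | σ w = some v}.Subsingleton
  /-- `(C₃)`, second half: `σ⁻¹(x₀) = ∅`. -/
  C3' : ∀ w, σ w ≠ some x0

/-- Auxiliary fuelled definition of the game value of the game `𝒢(G', v₀)`.  A position
consists of the current vertex `cur` together with the list `P` of previously visited
vertices (most recent first); the player to move must choose a vertex `v` not occurring
in the position, adjacent to `cur`; a position is a win for the player to move iff some
legal move leads to a loss for the player to move there.  The fuel is (an upper bound
on) the number of unused vertices, which decreases by one at each move, so that with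
fuel equal to the number of unused vertices this is exactly the well-founded definition
of the game value. -/
def winAux {W : Type} (G' : SimpleGraph W) : ℕ → List W → W → Prop
  | 0, _, _ => False
  | n + 1, P, cur => ∃ v, v ∉ cur :: P ∧ G'.Adj cur v ∧ ¬ winAux G' n (cur :: P) v

/-- The position of `𝒢(G', v₀)` with current vertex `cur` and previously visited
vertices `P` (most recent first) is a win for the player to move. -/
def WinPos {W : Type} [Fintype W] (G' : SimpleGraph W) (P : List W) (cur : W) : Prop :=
  winAux G' {w : W | w ∉ cur :: P}.ncard P cur

/-- The invariant maintained at positions where Player 1 is to move. -/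
def GameInv {W : Type} (R : Set W) (σ : W → Option W) (P : List W) (cur : W) : Prop :=
  (∀ w ∈ cur :: P, w ∈ R) ∧
  (∃ u, σ cur = some u ∧ u ∉ cur :: P) ∧
  (∀ w ∈ cur :: P, σ w = none → ∃ v ∈ cur :: P, σ v = some w)

lemma key {W : Type} [Fintype W] (G' : SimpleGraph W) {x0 : W} {R : Set W}
    {σ : W → Option W} (hA : IsAssignment G' x0 R σ) :
    ∀ n (P : List W) (cur : W), GameInv R σ P cur →
      {w : W | w ∉ cur :: P}.ncard ≤ n → winAux G' n P cur := by
  intro n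
  induction n using Nat.strong_induction_on with
  | _ n IH =>
    intro P cur hInv hn
    obtain ⟨h1, ⟨u, hσ, hu⟩, h4⟩ := hInv
    have hcurR : cur ∈ R := h1 cur (List.mem_cons_self)
    obtain ⟨hadj, huR, hσu⟩ := hA.C1 cur hcurR u hσ
    have hpos : 0 < {w : W | w ∉ cur :: P}.ncard :=
      (Set.ncard_pos (Set.toFinite _)).2 ⟨u, hu⟩
    match n, hn with
    | 0, hn => omega
    | m + 1, hn =>
      refine ⟨u, hu, hadj, ?_⟩
      match m with
      | 0 => exact fun h => h
      | k + 1 =>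
        rintro ⟨w, hwP, hadj2, hnwin⟩
        apply hnwin
        obtain ⟨hwR, hσw'⟩ := hA.C2 u huR hσu w hadj2
        obtain ⟨x, hσw⟩ : ∃ x, σ w = some x := by
          cases hx : σ w with
          | none => exact absurd hx hσw'
          | some x => exact ⟨x, rfl⟩
        obtain ⟨hadjwx, hxR, hσx⟩ := hA.C1 w hwR x hσw
        -- extended property 4 on u :: cur :: P
        have h4' : ∀ y ∈ u :: cur :: P, σ y = none → ∃ v ∈ u :: cur :: P, σ v = some y := by
          intro y hy hyn
          rcases List.mem_cons.1 hy with rfl | hy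
          · exact ⟨cur, List.mem_cons_of_mem _ (List.mem_cons_self), hσ⟩
          · obtain ⟨v, hv, hv'⟩ := h4 y hy hyn
            exact ⟨v, List.mem_cons_of_mem _ hv, hv'⟩
        have hxnot : x ∉ w :: u :: cur :: P := by
          intro hx
          rcases List.mem_cons.1 hx with rfl | hx
          · exact G'.ne_of_adj hadjwx rfl
          · obtain ⟨v, hv, hv'⟩ := h4' x hx hσx
            have : v = w := hA.C3 x hxR hv' hσw
            exact hwP (this ▸ hv)
        have hInv' : GameInv R σ (u :: cur :: P) w := by
          refine ⟨?_, ⟨x, hσw, hxnot⟩, ?_⟩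
          · intro y hy
            rcases List.mem_cons.1 hy with rfl | hy
            · exact hwR
            rcases List.mem_cons.1 hy with rfl | hy
            · exact huR
            · exact h1 y hy
          · intro y hy hyn
            rcases List.mem_cons.1 hy with rfl | hy
            · rw [hσw] at hyn; exact absurd hyn (by simp)
            · obtain ⟨v, hv, hv'⟩ := h4' y hy hyn
              exact ⟨v, List.mem_cons_of_mem _ hv, hv'⟩
        apply IH k (by omega) _ _ hInv'
        -- cardinality bookkeeping
        have hsub : insert u (insert w {z : W | z ∉ w :: u :: cur :: P})
            ⊆ {z : W | z ∉ cur :: P} := by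
          intro z hz
          rcases Set.mem_insert_iff.1 hz with rfl | hz
          · exact hu
          rcases Set.mem_insert_iff.1 hz with rfl | hz
          · intro hc; exact hwP (List.mem_cons_of_mem _ hc)
          · intro hc
            exact hz (List.mem_cons_of_mem _ (List.mem_cons_of_mem _ hc))
        have hwu : w ≠ u := fun h => hwP (h ▸ List.mem_cons_self)
        have hcard1 : (insert w {z : W | z ∉ w :: u :: cur :: P}).ncard
            = {z : W | z ∉ w :: u :: cur :: P}.ncard + 1 :=
          Set.ncard_insert_of_notMem (fun h => h (List.mem_cons_self))
            (Set.toFinite _)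
        have hcard2 : (insert u (insert w {z : W | z ∉ w :: u :: cur :: P})).ncard
            = (insert w {z : W | z ∉ w :: u :: cur :: P}).ncard + 1 := by
          refine Set.ncard_insert_of_notMem ?_ (Set.toFinite _)
          intro h
          rcases Set.mem_insert_iff.1 h with h | h
          · exact hwu h.symm
          · exact h (List.mem_cons_of_mem _ (List.mem_cons_self))
        have := Set.ncard_le_ncard hsub (Set.toFinite _)
        omega

/-- Let `(R, σ)` be an assignment for `(G', v₀)`.  If `σ(v₀) ≠ ⊥`, then Player 1 has a
winning strategy in the game `𝒢(G', v₀)`, i.e. the initial position `v₀` is a win for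
the player to move. -/
theorem stmt0 {V : Type} [Fintype V] (G : SimpleGraph V) (V1 V2 : Set V)
    (hcover : V1 ∪ V2 = Set.univ) (hdisj : Disjoint V1 V2)
    (hbip : ∀ ⦃u w : V⦄, G.Adj u w → (u ∈ V1 ∧ w ∈ V2) ∨ (u ∈ V2 ∧ w ∈ V1))
    (R : Set (Vext V)) (σ : Vext V → Option (Vext V))
    (hA : IsAssignment (extGraph G V1) vzero R σ)
    (h : σ vzero ≠ none) :
    WinPos (extGraph G V1) [] vzero := by
  obtain ⟨u, hσ⟩ : ∃ u, σ vzero = some u := by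
    cases hx : σ vzero with
    | none => exact absurd hx h
    | some u => exact ⟨u, rfl⟩
  refine key (extGraph G V1) hA _ [] vzero ⟨?_, ⟨u, hσ, ?_⟩, ?_⟩ le_rfl
  · intro w hw
    rcases List.mem_cons.1 hw with rfl | hw
    · exact hA.mem
    · simp at hw
  · intro hu
    rcases List.mem_cons.1 hu with rfl | hu
    · exact hA.C3' vzero hσ
    · simp at hu
  · intro w hw hwn
    rcases List.mem_cons.1 hw with rfl | hw
    · exact absurd hwn (by rw [hσ]; simp)
    · simp at hw
end

section
/- Let (R,σ) be an assignment for (G',v₀) with σ(v₀) ≠ ⊥. Then for every u ∈ V₁ one has σ(u) ∈ V₂ with u σ(u) an edge of G, and the set M = { {u, σ(u)} : u ∈ V₁ } is a matching of G covering V₁; in particular G has a matching covering V₁. -/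
/-- `M` is a matching of `G`: a set of edges of `G` that are pairwise disjoint. -/
def IsMatchingOf {V : Type} (G : SimpleGraph V) (M : Set (Sym2 V)) : Prop :=
  M ⊆ G.edgeSet ∧ M.Pairwise fun p q => ∀ x, x ∈ p → x ∉ q

/-- The set of edges `M` covers the vertex set `S`. -/
def CoversSet {V : Type} (M : Set (Sym2 V)) (S : Set V) : Prop :=
  ∀ u ∈ S, ∃ p ∈ M, u ∈ p

/-- Let `(R, σ)` be an assignment for `(G', v₀)` with `σ(v₀) ≠ ⊥`.  Then for every
`u ∈ V₁` one has `σ(u) ∈ V₂` with `u σ(u)` an edge of `G`, and the set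
`M = { {u, σ(u)} : u ∈ V₁ }` is a matching of `G` covering `V₁`; in particular `G`
has a matching covering `V₁`. -/
theorem stmt2 {V : Type} [Fintype V] (G : SimpleGraph V) (V1 V2 : Set V)
    (hcover : V1 ∪ V2 = Set.univ) (hdisj : Disjoint V1 V2)
    (hbip : ∀ ⦃u w : V⦄, G.Adj u w → (u ∈ V1 ∧ w ∈ V2) ∨ (u ∈ V2 ∧ w ∈ V1))
    (R : Set (Vext V)) (σ : Vext V → Option (Vext V))
    (hA : IsAssignment (extGraph G V1) vzero R σ)
    (h : σ vzero ≠ none) :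
    (∀ u ∈ V1, ∃ w ∈ V2, G.Adj u w ∧ σ (emb u) = some (emb w)) ∧
    IsMatchingOf G {p | ∃ u ∈ V1, ∃ w : V, σ (emb u) = some (emb w) ∧ p = s(u, w)} ∧
    CoversSet {p | ∃ u ∈ V1, ∃ w : V, σ (emb u) = some (emb w) ∧ p = s(u, w)} V1 ∧
    ∃ M : Set (Sym2 V), IsMatchingOf G M ∧ CoversSet M V1 := by
  obtain ⟨u0, hu0⟩ : ∃ u, σ vzero = some u := Option.ne_none_iff_exists'.mp h
  obtain ⟨hadj0, hu0R, hσu0⟩ := hA.C1 vzero hA.mem u0 hu0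
  have hu0v1 : u0 = vone := by
    rcases u0 with _ | (_ | x)
    · exact absurd hadj0 (by simp [extGraph, vzero])
    · rfl
    · exact absurd hadj0 (by simp [extGraph, vzero, emb])
  subst hu0v1
  have key : ∀ u ∈ V1, ∃ w ∈ V2, G.Adj u w ∧ σ (emb u) = some (emb w)
      ∧ emb u ∈ R ∧ emb w ∈ R := by
    intro u hu
    have hadj1 : (extGraph G V1).Adj vone (emb u) := hu
    obtain ⟨huR, hune⟩ := hA.C2 vone hu0R hσu0 (emb u) hadj1
    obtain ⟨w, hw⟩ := Option.ne_none_iff_exists'.mp hune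
    obtain ⟨hadj, hwR, hσw⟩ := hA.C1 (emb u) huR w hw
    rcases w with _ | (_ | x)
    · exact absurd hadj (by simp [extGraph, emb, vzero])
    · exfalso
      have : vzero = emb u := hA.C3 vone hu0R hu0 hw
      simp [vzero, emb] at this
    · have hadj' : G.Adj u x := hadj
      rcases hbip hadj' with ⟨_, hx2⟩ | ⟨hu2, _⟩
      · exact ⟨x, hx2, hadj', hw, huR, hwR⟩
      · exact absurd hu2 (Set.disjoint_left.mp hdisj hu)
  have key' : ∀ u ∈ V1, ∃ w ∈ V2, G.Adj u w ∧ σ (emb u) = some (emb w) := by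
    intro u hu
    obtain ⟨w, h1, h2, h3, _⟩ := key u hu
    exact ⟨w, h1, h2, h3⟩
  have hM : IsMatchingOf G
      {p | ∃ u ∈ V1, ∃ w : V, σ (emb u) = some (emb w) ∧ p = s(u, w)} := by
    constructor
    · rintro p ⟨u, hu, w, hσ, rfl⟩
      obtain ⟨w', _, hadj, hσ', _, _⟩ := key u hu
      rw [hσ] at hσ'
      simp only [emb, Option.some.injEq] at hσ'
      subst hσ'
      exact hadj
    · rintro p ⟨u, hu, w, hσ, rfl⟩ q ⟨u', hu', w', hσ', rfl⟩ hpq x hxp hxq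
      obtain ⟨w2, hw2V, _, hσ2, huR, hwR⟩ := key u hu
      rw [hσ] at hσ2
      simp only [emb, Option.some.injEq] at hσ2
      subst hσ2
      obtain ⟨w2', hw2V', _, hσ2', huR', hwR'⟩ := key u' hu'
      rw [hσ'] at hσ2'
      simp only [emb, Option.some.injEq] at hσ2'
      subst hσ2'
      rw [Sym2.mem_iff] at hxp hxq
      rcases hxp with rfl | rfl <;> rcases hxq with rfl | rfl
      · rw [hσ] at hσ'
        simp only [emb, Option.some.injEq] at hσ'
        subst hσ'
        exact hpq rfl
      · exact absurd hw2V' (Set.disjoint_left.mp hdisj hu)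
      · exact absurd hw2V (Set.disjoint_left.mp hdisj hu')
      · have : emb u = emb u' := hA.C3 (emb x) hwR hσ hσ'
        simp only [emb, Option.some.injEq] at this
        subst this
        exact hpq rfl
  have hC : CoversSet
      {p | ∃ u ∈ V1, ∃ w : V, σ (emb u) = some (emb w) ∧ p = s(u, w)} V1 := by
    intro u hu
    obtain ⟨w, _, _, hσ⟩ := key' u hu
    exact ⟨s(u, w), ⟨u, hu, w, hσ, rfl⟩, Sym2.mem_mk_left u w⟩
  exact ⟨key', hM, hC, _, hM, hC⟩
end

section
/- Let (R,σ) be an assignment for (G',v₀) with σ(v₀) = ⊥. Then the set S = { u ∈ R ∩ V₁ : σ(u) = ⊥ } satisfies |N_G(S)| < |S|; in particular there exists a set S ⊆ V₁ with |N_G(S)| < |S|. -/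
/-- The neighbourhood `N_G(S)`: the set of vertices outside `S` adjacent in `G` to some
vertex of `S`. -/
def nbhd {V : Type} (G : SimpleGraph V) (S : Set V) : Set V :=
  {w | w ∉ S ∧ ∃ u ∈ S, G.Adj u w}

/-- Let `(R, σ)` be an assignment for `(G', v₀)` with `σ(v₀) = ⊥`.  Then the set
`S = { u ∈ R ∩ V₁ : σ(u) = ⊥ }` satisfies `|N_G(S)| < |S|`; in particular there exists
a set `S ⊆ V₁` with `|N_G(S)| < |S|`. -/
theorem stmt3 {V : Type} [Fintype V] (G : SimpleGraph V) (V1 V2 : Set V)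
    (hcover : V1 ∪ V2 = Set.univ) (hdisj : Disjoint V1 V2)
    (hbip : ∀ ⦃u w : V⦄, G.Adj u w → (u ∈ V1 ∧ w ∈ V2) ∨ (u ∈ V2 ∧ w ∈ V1))
    (R : Set (Vext V)) (σ : Vext V → Option (Vext V))
    (hA : IsAssignment (extGraph G V1) vzero R σ)
    (h : σ vzero = none) :
    (nbhd G {u : V | emb u ∈ R ∧ u ∈ V1 ∧ σ (emb u) = none}).ncard
        < {u : V | emb u ∈ R ∧ u ∈ V1 ∧ σ (emb u) = none}.ncard ∧
    ∃ S ⊆ V1, (nbhd G S).ncard < S.ncard := by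
  classical
  obtain ⟨hmem, C1, C2, C3, C3'⟩ := hA
  set S : Set V := {u : V | emb u ∈ R ∧ u ∈ V1 ∧ σ (emb u) = none} with hSdef
  -- v₁ ∈ R and σ v₁ ≠ none
  have hadj01 : (extGraph G V1).Adj vzero vone := by trivial
  obtain ⟨hv1R, hv1ne⟩ := C2 vzero hmem h vone hadj01
  obtain ⟨u, hu⟩ := Option.ne_none_iff_exists'.mp hv1ne
  obtain ⟨hadj, huR, huσ⟩ := C1 vone hv1R u hu
  obtain ⟨w, hwV1, rfl⟩ : ∃ w, w ∈ V1 ∧ u = emb w := by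
    match u, hadj, hu with
    | none, hadj, hu => exact absurd hu (C3' vone)
    | some none, hadj, hu => exact hadj.elim
    | some (some z), hadj, hu => exact ⟨z, hadj, rfl⟩
  have hwS : w ∈ S := ⟨huR, hwV1, huσ⟩
  -- the key map
  set f : V → V := fun x => match σ (emb x) with
    | some (some (some z)) => z
    | _ => w with hfdef
  have key : ∀ x ∈ nbhd G S, (f x ∈ S ∧ f x ≠ w) ∧ σ (emb x) = some (emb (f x)) := by
    rintro x ⟨hxS, a, haS, hax⟩
    obtain ⟨haR, haV1, haσ⟩ := haS
    have hxV2 : x ∈ V2 := by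
      rcases hbip hax with ⟨_, h2⟩ | ⟨h1, _⟩
      · exact h2
      · exact absurd h1 (Set.disjoint_left.mp hdisj haV1)
    have hxV1 : x ∉ V1 := fun hh => Set.disjoint_left.mp hdisj hh hxV2
    have hadjax : (extGraph G V1).Adj (emb a) (emb x) := hax
    obtain ⟨hxR, hxne⟩ := C2 (emb a) haR haσ (emb x) hadjax
    obtain ⟨y, hy⟩ := Option.ne_none_iff_exists'.mp hxne
    obtain ⟨hadjy, hyR, hyσ⟩ := C1 (emb x) hxR y hy
    obtain ⟨z, hgzx, rfl⟩ : ∃ z, G.Adj x z ∧ y = emb z := by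
      match y, hadjy, hy with
      | none, hadjy, hy => exact hadjy.elim
      | some none, hadjy, hy => exact absurd hadjy hxV1
      | some (some z), hadjy, hy => exact ⟨z, hadjy, rfl⟩
    have hzV1 : z ∈ V1 := by
      rcases hbip hgzx with ⟨h1, _⟩ | ⟨_, h2⟩
      · exact absurd h1 (fun hh => Set.disjoint_left.mp hdisj hh hxV2)
      · exact h2
    have hzS : z ∈ S := ⟨hyR, hzV1, hyσ⟩
    have hfz : f x = z := by
      simp only [hfdef]
      rw [hy]
      rfl
    have hzw : z ≠ w := by
      rintro rfl
      have : vone (V := V) = emb x := C3 (emb z) hyR hu hy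
      simp [vone, emb] at this
    rw [hfz]
    exact ⟨⟨hzS, hzw⟩, hy⟩
  have hmaps : ∀ x ∈ nbhd G S, f x ∈ S \ {w} := fun x hx =>
    ⟨(key x hx).1.1, (key x hx).1.2⟩
  have hinj : Set.InjOn f (nbhd G S) := by
    intro x hx x' hx' hxx'
    have h1 := (key x hx).2
    have h2 := (key x' hx').2
    rw [hxx'] at h1
    have hzR : emb (f x') ∈ R := (key x' hx').1.1.1
    have := C3 (emb (f x')) hzR h1 h2
    simpa [emb] using this
  have hle : (nbhd G S).ncard ≤ (S \ {w}).ncard :=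
    Set.ncard_le_ncard_of_injOn f hmaps hinj (Set.toFinite _)
  have hlt : (S \ {w}).ncard < S.ncard :=
    Set.ncard_diff_singleton_lt_of_mem hwS (Set.toFinite _)
  refine ⟨lt_of_le_of_lt hle hlt, S, fun x hx => hx.2.1, lt_of_le_of_lt hle hlt⟩
end

section
/- For every finite simple bipartite graph G with bipartition V₁, V₂, and for the pair (G',v₀) derived from G, there exists an assignment (R,σ) for (G',v₀). -/
open Finset in
lemma hallCases {V : Type} [Fintype V] (G : SimpleGraph V) (V1 : Set V) :
    (∃ g : V → V, Set.InjOn g V1 ∧ ∀ a ∈ V1, G.Adj a (g a)) ∨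
    (∃ A : Set V, A ⊆ V1 ∧ ∃ a₀ ∈ A, ∃ f : V → V,
      Set.InjOn f {w | ∃ a ∈ A, G.Adj a w} ∧
      ∀ w, (∃ a ∈ A, G.Adj a w) → G.Adj (f w) w ∧ f w ∈ A ∧ f w ≠ a₀) := by
  classical
  set V1f : Finset V := Finset.univ.filter (· ∈ V1) with hV1f
  set N : Finset V → Finset V :=
    fun S => Finset.univ.filter (fun w => ∃ a ∈ S, G.Adj a w) with hNdef
  have hNmem : ∀ (S : Finset V) (w : V), w ∈ N S ↔ ∃ a ∈ S, G.Adj a w := by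
    intro S w; simp [hNdef]
  obtain ⟨A, hApow, hAmax⟩ := Finset.exists_max_image V1f.powerset
    (fun S => S.card - (N S).card) ⟨∅, Finset.empty_mem_powerset _⟩
  have hAsub : A ⊆ V1f := Finset.mem_powerset.mp hApow
  by_cases hcase : (N A).card < A.card
  · -- deficient case
    right
    -- reverse Hall condition
    have hrev : ∀ s : Finset {w // w ∈ N A},
        s.card ≤ (s.biUnion (fun w => G.neighborFinset w.1 ∩ A)).card := by
      intro s
      set T : Finset V := s.image Subtype.val with hT
      have hTcard : T.card = s.card := Finset.card_image_of_injective _ Subtype.val_injective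
      have hTsub : T ⊆ N A := by
        intro w hw
        rcases Finset.mem_image.mp hw with ⟨⟨w', hw'⟩, _, rfl⟩
        exact hw'
      set X : Finset V := A.filter (fun a => ∃ w ∈ T, G.Adj a w) with hX
      have hbiU : s.biUnion (fun w => G.neighborFinset w.1 ∩ A) = X := by
        ext a
        simp only [Finset.mem_biUnion, Finset.mem_inter, SimpleGraph.mem_neighborFinset,
          hX, Finset.mem_filter, hT, Finset.mem_image]
        constructor
        · rintro ⟨⟨w, hw⟩, hws, hadj, ha⟩
          exact ⟨ha, w, ⟨⟨w, hw⟩, hws, rfl⟩, hadj.symm⟩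
        · rintro ⟨ha, w, ⟨⟨w', hw'⟩, hws, rfl⟩, hadj⟩
          exact ⟨⟨w', hw'⟩, hws, hadj.symm, ha⟩
      rw [hbiU, ← hTcard]
      by_contra hlt
      push_neg at hlt
      set A' : Finset V := A.filter (fun a => ¬ ∃ w ∈ T, G.Adj a w) with hA'
      have h1 : X.card + A'.card = A.card := by
        rw [hX, hA']; exact Finset.card_filter_add_card_filter_not _
      have h2 : N A' ⊆ N A \ T := by
        intro w hw
        rcases (hNmem _ _).mp hw with ⟨a, ha, hadj⟩
        have haA : a ∈ A := (Finset.mem_filter.mp ha).1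
        have hnot : ¬ ∃ w ∈ T, G.Adj a w := (Finset.mem_filter.mp ha).2
        refine Finset.mem_sdiff.mpr ⟨(hNmem _ _).mpr ⟨a, haA, hadj⟩, ?_⟩
        intro hwT; exact hnot ⟨w, hwT, hadj⟩
      have h3 : (N A').card ≤ (N A).card - T.card := by
        calc (N A').card ≤ (N A \ T).card := Finset.card_le_card h2
        _ = (N A).card - T.card := Finset.card_sdiff_of_subset hTsub
      have h4 : A'.card - (N A').card ≤ A.card - (N A).card := by
        apply hAmax
        exact Finset.mem_powerset.mpr ((Finset.filter_subset _ _).trans hAsub)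
      have h5 : T.card ≤ (N A).card := Finset.card_le_card hTsub
      omega
    obtain ⟨f0, hf0inj, hf0mem⟩ :=
      (Finset.all_card_le_biUnion_card_iff_exists_injective
        (fun w : {w // w ∈ N A} => G.neighborFinset w.1 ∩ A)).mp hrev
    -- find a₀ not in range of f0
    have himg : (Finset.univ.image f0).card < A.card := by
      have h1 : (Finset.univ.image f0).card ≤ (Finset.univ : Finset {w // w ∈ N A}).card :=
        Finset.card_image_le
      have h2 : (Finset.univ : Finset {w // w ∈ N A}).card = (N A).card := by simp
      omega
    have himgsub : Finset.univ.image f0 ⊆ A := by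
      intro a ha
      rcases Finset.mem_image.mp ha with ⟨w, _, rfl⟩
      exact (Finset.mem_inter.mp (hf0mem w)).2
    obtain ⟨a₀, ha₀A, ha₀nimg⟩ : ∃ a₀ ∈ A, a₀ ∉ Finset.univ.image f0 := by
      by_contra h
      push_neg at h
      have : A ⊆ Finset.univ.image f0 := h
      have := Finset.card_le_card this
      omega
    refine ⟨(A : Set V), ?_, a₀, by simpa using ha₀A, 
      fun w => if h : w ∈ N A then f0 ⟨w, h⟩ else w, ?_, ?_⟩
    · intro a ha
      have : a ∈ A := by simpa using ha
      simpa [hV1f] using hAsub this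
    · intro w1 hw1 w2 hw2 heq
      have hw1' : w1 ∈ N A := (hNmem _ _).mpr (by simpa using hw1)
      have hw2' : w2 ∈ N A := (hNmem _ _).mpr (by simpa using hw2)
      simp only [dif_pos hw1', dif_pos hw2'] at heq
      have := hf0inj heq
      exact congrArg Subtype.val this
    · intro w hw
      have hw' : w ∈ N A := (hNmem _ _).mpr (by simpa using hw)
      simp only [dif_pos hw']
      have hmem := Finset.mem_inter.mp (hf0mem ⟨w, hw'⟩)
      refine ⟨(SimpleGraph.mem_neighborFinset _ _ _ |>.mp hmem.1).symm, by simpa using hmem.2, ?_⟩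
      intro heq
      exact ha₀nimg (heq ▸ Finset.mem_image_of_mem f0 (Finset.mem_univ _))
  · -- Hall case
    left
    push_neg at hcase
    have hhall : ∀ s : Finset {a // a ∈ V1}, s.card ≤ (s.biUnion (fun a => G.neighborFinset a.1)).card := by
      intro s
      set S : Finset V := s.image Subtype.val with hS
      have hScard : S.card = s.card := Finset.card_image_of_injective _ Subtype.val_injective
      have hSsub : S ⊆ V1f := by
        intro v hv
        rcases Finset.mem_image.mp hv with ⟨⟨v', hv'⟩, _, rfl⟩
        simp [hV1f, hv']
      have hbiU : s.biUnion (fun a => G.neighborFinset a.1) = N S := by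
        ext w
        simp only [Finset.mem_biUnion, SimpleGraph.mem_neighborFinset, hNmem, hS,
          Finset.mem_image]
        constructor
        · rintro ⟨⟨a, ha⟩, has, hadj⟩
          exact ⟨a, ⟨⟨a, ha⟩, has, rfl⟩, hadj⟩
        · rintro ⟨a, ⟨⟨a', ha'⟩, has, rfl⟩, hadj⟩
          exact ⟨⟨a', ha'⟩, has, hadj⟩
      rw [hbiU, ← hScard]
      have hdef : S.card - (N S).card ≤ A.card - (N A).card :=
        hAmax S (Finset.mem_powerset.mpr hSsub)
      omega
    obtain ⟨f0, hf0inj, hf0mem⟩ :=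
      (Finset.all_card_le_biUnion_card_iff_exists_injective
        (fun a : {a // a ∈ V1} => G.neighborFinset a.1)).mp hhall
    refine ⟨fun v => if h : v ∈ V1 then f0 ⟨v, h⟩ else v, ?_, ?_⟩
    · intro a ha b hb heq
      simp only [dif_pos ha, dif_pos hb] at heq
      exact congrArg Subtype.val (hf0inj heq)
    · intro a ha
      simp only [dif_pos ha]
      exact SimpleGraph.mem_neighborFinset _ _ _ |>.mp (hf0mem ⟨a, ha⟩)


open Classical in
/-- Assignment map for the case of a matching saturating `V₁`. -/
noncomputable def sig1 {V : Type} (V1 : Set V) (g : V → V) : Vext V → Option (Vext V)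
  | none => some vone
  | some none => none
  | some (some v) => if v ∈ V1 then some (emb (g v)) else none

open Classical in
/-- Assignment map for the deficient case. -/
noncomputable def sig2 {V : Type} (NA : Set V) (a₀ : V) (f : V → V) :
    Vext V → Option (Vext V)
  | none => none
  | some none => some (emb a₀)
  | some (some w) => if w ∈ NA then some (emb (f w)) else none

lemma sig1_eq_some {V : Type} {V1 : Set V} {g : V → V} {w x : Vext V}
    (h : sig1 V1 g w = some x) :
    (w = vzero ∧ x = vone) ∨ ∃ a ∈ V1, w = emb a ∧ x = emb (g a) := by
  rcases w with _ | (_ | a)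
  · left
    simp only [sig1] at h
    exact ⟨rfl, (Option.some_injective _ h).symm⟩
  · simp [sig1] at h
  · right
    simp only [sig1] at h
    by_cases ha : a ∈ V1
    · rw [if_pos ha] at h
      exact ⟨a, ha, rfl, (Option.some_injective _ h).symm⟩
    · rw [if_neg ha] at h; cases h

lemma sig2_eq_some {V : Type} {NA : Set V} {a₀ : V} {f : V → V} {w x : Vext V}
    (h : sig2 NA a₀ f w = some x) :
    (w = vone ∧ x = emb a₀) ∨ ∃ u ∈ NA, w = emb u ∧ x = emb (f u) := by
  rcases w with _ | (_ | u)
  · simp [sig2] at h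
  · left
    simp only [sig2] at h
    exact ⟨rfl, (Option.some_injective _ h).symm⟩
  · right
    simp only [sig2] at h
    by_cases hu : u ∈ NA
    · rw [if_pos hu] at h
      exact ⟨u, hu, rfl, (Option.some_injective _ h).symm⟩
    · rw [if_neg hu] at h; cases h

/-- For every finite simple bipartite graph `G` with bipartition `V₁, V₂`, and for the
pair `(G', v₀)` derived from `G`, there exists an assignment `(R, σ)` for `(G', v₀)`. -/
theorem stmt4 {V : Type} [Fintype V] (G : SimpleGraph V) (V1 V2 : Set V)
    (hcover : V1 ∪ V2 = Set.univ) (hdisj : Disjoint V1 V2)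
    (hbip : ∀ ⦃u w : V⦄, G.Adj u w → (u ∈ V1 ∧ w ∈ V2) ∨ (u ∈ V2 ∧ w ∈ V1)) :
    ∃ (R : Set (Vext V)) (σ : Vext V → Option (Vext V)),
      IsAssignment (extGraph G V1) vzero R σ := by
  classical
  rcases hallCases G V1 with ⟨g, hginj, hg⟩ | ⟨A, hAV1, a₀, ha₀, f, hfinj, hf⟩
  · -- matching saturating V₁
    have hgV2 : ∀ a ∈ V1, g a ∈ V2 := by
      intro a ha
      rcases hbip (hg a ha) with ⟨_, h⟩ | ⟨h, _⟩
      · exact h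
      · exact absurd h (Set.disjoint_left.mp hdisj ha)
    have hgn1 : ∀ a ∈ V1, g a ∉ V1 := fun a ha =>
      Set.disjoint_right.mp hdisj (hgV2 a ha)
    refine ⟨({vzero, vone} : Set (Vext V)) ∪ emb '' V1 ∪ emb '' (g '' V1),
      sig1 V1 g, ?_, ?_, ?_, ?_, ?_⟩
    · exact Or.inl (Or.inl (Set.mem_insert _ _))
    · -- C1
      intro v hv u hu
      rcases sig1_eq_some hu with ⟨rfl, rfl⟩ | ⟨a, ha, rfl, rfl⟩
      · exact ⟨trivial, Or.inl (Or.inl (Or.inr rfl)), rfl⟩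
      · refine ⟨hg a ha, Or.inr ⟨g a, ⟨a, ha, rfl⟩, rfl⟩, ?_⟩
        exact if_neg (hgn1 a ha)
    · -- C2
      intro v hv h0 u hadj
      rcases v with _ | (_ | b)
      · simp [sig1] at h0
      · -- v = vone
        rcases u with _ | (_ | c)
        · exact ⟨Or.inl (Or.inl (Set.mem_insert _ _)), by simp [sig1]⟩
        · exact (hadj : False).elim
        · have hc : c ∈ V1 := hadj
          exact ⟨Or.inl (Or.inr ⟨c, hc, rfl⟩), by simp [sig1, hc]⟩
      · -- v = emb b
        have hb : b ∉ V1 := by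
          intro hb
          simp [sig1, hb] at h0
        have hbV2 : b ∈ V2 := by
          rcases hv with (h | ⟨a, ha, hab⟩) | ⟨x, ⟨a, ha, rfl⟩, hab⟩
          · rcases h with h | h <;> simp [vzero, vone, emb] at h
          · exact absurd ((Option.some_injective _
              (Option.some_injective _ hab)).symm ▸ ha) hb
          · have : g a = b := Option.some_injective _ (Option.some_injective _ hab)
            exact this ▸ hgV2 a ha
        rcases u with _ | (_ | c)
        · exact (hadj : False).elim
        · exact absurd (hadj : b ∈ V1) hb
        · have hadj' : G.Adj b c := hadj
          have hc : c ∈ V1 := by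
            rcases hbip hadj' with ⟨h, _⟩ | ⟨_, h⟩
            · exact absurd h hb
            · exact h
          exact ⟨Or.inl (Or.inr ⟨c, hc, rfl⟩), by simp [sig1, hc]⟩
    · -- C3
      intro v hv w1 h1 w2 h2
      rcases sig1_eq_some h1 with ⟨rfl, rfl⟩ | ⟨a, ha, rfl, rfl⟩ <;>
        rcases sig1_eq_some h2 with ⟨rfl, h2'⟩ | ⟨a', ha', rfl, h2'⟩
      · rfl
      · simp [vone, emb] at h2'
      · simp [vone, emb] at h2'
      · have : g a = g a' := by simpa [emb] using h2'
        rw [hginj ha ha' this]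
    · -- C3'
      intro w hw
      rcases sig1_eq_some hw with ⟨_, h⟩ | ⟨a, _, _, h⟩
      · simp [vone, vzero] at h
      · simp [emb, vzero] at h
  · -- deficient case
    set NA : Set V := {w | ∃ a ∈ A, G.Adj a w} with hNA
    have hNAV2 : ∀ w ∈ NA, w ∈ V2 := by
      rintro w ⟨a, ha, hadj⟩
      rcases hbip hadj with ⟨_, h⟩ | ⟨h, _⟩
      · exact h
      · exact absurd h (Set.disjoint_left.mp hdisj (hAV1 ha))
    have hNAn1 : ∀ w ∈ NA, w ∉ V1 := fun w hw =>
      Set.disjoint_right.mp hdisj (hNAV2 w hw)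
    have hAnNA : ∀ a ∈ A, a ∉ NA := fun a ha h =>
      hNAn1 a h (hAV1 ha)
    refine ⟨({vzero, vone} : Set (Vext V)) ∪ emb '' A ∪ emb '' NA,
      sig2 NA a₀ f, ?_, ?_, ?_, ?_, ?_⟩
    · exact Or.inl (Or.inl (Set.mem_insert _ _))
    · -- C1
      intro v hv u hu
      rcases sig2_eq_some hu with ⟨rfl, rfl⟩ | ⟨w, hw, rfl, rfl⟩
      · refine ⟨hAV1 ha₀, Or.inl (Or.inr ⟨a₀, ha₀, rfl⟩), ?_⟩
        exact if_neg (hAnNA a₀ ha₀)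
      · have hfw := hf w hw
        refine ⟨hfw.1.symm, Or.inl (Or.inr ⟨f w, hfw.2.1, rfl⟩), ?_⟩
        exact if_neg (hAnNA _ hfw.2.1)
    · -- C2
      intro v hv h0 u hadj
      rcases v with _ | (_ | b)
      · -- v = vzero
        rcases u with _ | (_ | c)
        · exact (hadj : False).elim
        · exact ⟨Or.inl (Or.inl (Or.inr rfl)), by simp [sig2, emb]⟩
        · exact (hadj : False).elim
      · simp [sig2, emb] at h0
      · -- v = emb b
        have hb : b ∉ NA := by
          intro hb
          simp [sig2, hb] at h0
        have hbA : b ∈ A := by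
          rcases hv with (h | ⟨a, ha, hab⟩) | ⟨w, hw, hab⟩
          · rcases h with h | h <;> simp [vzero, vone, emb] at h
          · exact (Option.some_injective _
              (Option.some_injective _ hab)).symm ▸ ha
          · have : w = b := Option.some_injective _ (Option.some_injective _ hab)
            exact absurd (this ▸ hw) hb
        rcases u with _ | (_ | c)
        · exact (hadj : False).elim
        · exact ⟨Or.inl (Or.inl (Or.inr rfl)), by simp [sig2, emb]⟩
        · have hadj' : G.Adj b c := hadj
          have hc : c ∈ NA := ⟨b, hbA, hadj'⟩
          exact ⟨Or.inr ⟨c, hc, rfl⟩, by simp [sig2, hc]⟩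
    · -- C3
      intro v hv w1 h1 w2 h2
      rcases sig2_eq_some h1 with ⟨rfl, rfl⟩ | ⟨w, hw, rfl, rfl⟩ <;>
        rcases sig2_eq_some h2 with ⟨rfl, h2'⟩ | ⟨w', hw', rfl, h2'⟩
      · rfl
      · have : a₀ = f w' := by simpa [emb] using h2'
        exact absurd this.symm (hf w' hw').2.2
      · have : f w = a₀ := by simpa [emb] using h2'
        exact absurd this (hf w hw).2.2
      · have : f w = f w' := by simpa [emb] using h2'
        rw [hfinj hw hw' this]
    · -- C3'
      intro w hw
      rcases sig2_eq_some hw with ⟨_, h⟩ | ⟨u, _, _, h⟩ <;> simp [emb, vzero] at h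
end

section
/- Let n be the number of vertices of G'. Consider any (finite or infinite) execution of the transition system starting from the initial state, and for a vertex v ∈ V' let S_v be the set of steps of the execution that are a deletion or an introduction of a pair containing v. Then |S_v| ≤ 2n for every v ∈ V'. -/
/-!
The transition system underlying Algorithm 1.  A state consists of the current path
`P` (stored as a list in *reverse* order, so that the head of the list is the last
vertex `v_k` of the path), the set `R` of reached vertices, and the two maps
`σ, τ : V' → V' ∪ {⊥}` (with `⊥` encoded by `none`).
-/

/-- A state of the transition system. -/
structure AlgState (W : Type) where
  /-- The current path `v₀ v₁ … v_k`, stored in reverse order (head `= v_k`). -/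
  P : List W
  /-- The set of reached vertices. -/
  R : Set W
  /-- The map `σ`. -/
  σ : W → Option W
  /-- The map `τ`. -/
  τ : W → Option W

/-- The initial state: `P = x₀ x₁`, `R = {x₀, x₁}`, `σ ≡ ⊥`, `τ ≡ ⊥`. -/
def initState {W : Type} (x0 x1 : W) : AlgState W :=
  ⟨[x1, x0], {x0, x1}, fun _ => none, fun _ => none⟩

/-- The labelled transition relation of the system, for a graph `G'`.  Steps are only
possible from states whose path `P = v₀ v₁ … v_k` has `k ≥ 1` (at least two vertices).
With `Z = { u ∈ V' − V(P) : u v_k ∈ E', σ(u) = ⊥ }`: if `Z = ∅`, the step is a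
*deletion* of the pair `(v_{k−1}, v_k)` (label `(v_{k−1}, some v_k)`); if `Z ≠ ∅`, the
step chooses `z ∈ Z` and is an *introduction* of the pair `(z, w)` where `w = τ(z)`
(label `(z, τ z)`). -/
inductive LStep {W : Type} [DecidableEq W] (G' : SimpleGraph W) :
    W × Option W → AlgState W → AlgState W → Prop
  | del (vk vk1 : W) (rest : List W) (R : Set W) (σ τ : W → Option W)
      (hZ : ∀ u, u ∉ vk :: vk1 :: rest → G'.Adj u vk → σ u ≠ none) :
      LStep G' (vk1, some vk)
        ⟨vk :: vk1 :: rest, R, σ, τ⟩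
        ⟨rest, R,
          Function.update (Function.update σ vk1 (some vk)) vk none,
          Function.update (Function.update τ vk (some vk1)) vk1 none⟩
  | intro_bot (vk : W) (rest : List W) (R : Set W) (σ τ : W → Option W) (z : W)
      (hrest : rest ≠ [])
      (hz : z ∉ vk :: rest) (hadj : G'.Adj z vk) (hσ : σ z = none) (hτ : τ z = none) :
      LStep G' (z, none)
        ⟨vk :: rest, R, σ, τ⟩
        ⟨z :: vk :: rest, insert z R, σ, τ⟩
  | intro_pair (vk : W) (rest : List W) (R : Set W) (σ τ : W → Option W) (z w : W)
      (hrest : rest ≠ [])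
      (hz : z ∉ vk :: rest) (hadj : G'.Adj z vk) (hσ : σ z = none) (hτ : τ z = some w) :
      LStep G' (z, some w)
        ⟨vk :: rest, R, σ, τ⟩
        ⟨w :: z :: vk :: rest, insert z R, σ, τ⟩

/-- The (unlabelled) transition relation. -/
def Step {W : Type} [DecidableEq W] (G' : SimpleGraph W) (s s' : AlgState W) : Prop :=
  ∃ l, LStep G' l s s'

/-- `{u, v}` is a match of the tuple `t = (σ, τ)`. -/
def IsMatchPair {W : Type} (σ τ : W → Option W) (u v : W) : Prop :=
  σ u = some v ∧ τ u = none ∧ σ v = none ∧ τ v = some u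

/-- The tuple `t = (σ, τ)` is valid for `(Q, R)`: (1) every `u` with `σ(u) ≠ ⊥` or
`τ(u) ≠ ⊥` belongs to `R`; (2) `Q` is a union of pairwise disjoint matches of `t`. -/
def ValidTuple {W : Type} (σ τ : W → Option W) (Q R : Set W) : Prop :=
  (∀ u, (σ u ≠ none ∨ τ u ≠ none) → u ∈ R) ∧
  ∃ pairs : Set (W × W),
    (∀ p ∈ pairs, IsMatchPair σ τ p.1 p.2) ∧
    pairs.PairwiseDisjoint (fun p => ({p.1, p.2} : Set W)) ∧
    Q = ⋃ p ∈ pairs, ({p.1, p.2} : Set W)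

/-- The deletion/introduction pair recorded by the label `l` contains the vertex `v`. -/
def PairContains {W : Type} (l : W × Option W) (v : W) : Prop :=
  l.1 = v ∨ l.2 = some v

namespace Stmt7Aux

variable {W : Type} [DecidableEq W] {G' : SimpleGraph W}

structure Inv (G' : SimpleGraph W) (s : AlgState W) : Prop where
  nodup : s.P.Nodup
  chain : s.P.Chain' G'.Adj
  sig_adj : ∀ x y, s.σ x = some y → G'.Adj x y
  sig_tau : ∀ x y, s.σ x = some y → s.τ y = some x
  sig_pos : ∀ x y, s.σ x = some y → x ∈ s.P → ∃ i : ℕ, s.P[i]? = some x ∧ s.P[i+1]? = some y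
  sig_off : ∀ x y, s.σ x = some y → x ∉ s.P → y ∉ s.P
  sig_sig : ∀ x y, s.σ x = some y → s.σ y = none
  tau_adj : ∀ x y, s.τ x = some y → G'.Adj x y
  tau_comp : ∀ x y, s.τ x = some y → s.σ x = none → x ∉ s.P → s.σ y = some x

lemma nodup_index {l : List W} (nd : l.Nodup) {i j : ℕ} {x : W}
    (hi : l[i]? = some x) (hj : l[j]? = some x) : i = j :=
  (List.getElem?_inj (List.getElem?_eq_some_iff.mp hi).1 nd).mp (hi.trans hj.symm)

theorem inv_init {x0 x1 : W} (hne : x1 ≠ x0) (hadj : G'.Adj x1 x0) :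
    Inv G' (initState x0 x1) := by
  refine ⟨by simp [initState, hne], by simp [initState, hadj, List.Chain'], ?_, ?_, ?_, ?_, ?_, ?_, ?_⟩ <;>
    simp [initState]

theorem inv_preserved {l : W × Option W} {s s' : AlgState W}
    (hs : Inv G' s) (h : LStep G' l s s') : Inv G' s' := by
  obtain ⟨nodup, chain, sig_adj, sig_tau, sig_pos, sig_off, sig_sig, tau_adj, tau_comp⟩ := hs
  cases h with
  | del vk vk1 rest R σ τ hZ =>
    simp only at nodup chain sig_adj sig_tau sig_pos sig_off sig_sig tau_adj tau_comp
    have hA : G'.Adj vk vk1 := (List.isChain_cons_cons.mp chain).1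
    have hkk : vk ≠ vk1 := G'.ne_of_adj hA
    have h0 : (vk :: vk1 :: rest)[0]? = some vk := rfl
    have h1 : (vk :: vk1 :: rest)[1]? = some vk1 := by simp
    have hknr : vk ∉ vk1 :: rest := (List.nodup_cons.mp nodup).1
    have h1nr : vk1 ∉ rest := (List.nodup_cons.mp (List.nodup_cons.mp nodup).2).1
    have na : ∀ x, σ x ≠ some vk := by
      intro x hx
      by_cases hxP : x ∈ vk :: vk1 :: rest
      · obtain ⟨i, _, hi1⟩ := sig_pos x vk hx hxP
        have : i + 1 = 0 := nodup_index nodup hi1 h0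
        omega
      · exact (sig_off x vk hx hxP) (by simp)
    have nb : ∀ x, σ x = some vk1 → x = vk := by
      intro x hx
      by_cases hxP : x ∈ vk :: vk1 :: rest
      · obtain ⟨i, hi, hi1⟩ := sig_pos x vk1 hx hxP
        have hone : i + 1 = 1 := nodup_index nodup hi1 h1
        have hi0 : i = 0 := by omega
        subst hi0
        rw [h0] at hi; exact (Option.some.inj hi).symm
      · exact absurd (by simp : vk1 ∈ vk :: vk1 :: rest) (sig_off x vk1 hx hxP)
    have nc : ∀ y, σ vk = some y → y = vk1 := by
      intro y hy
      obtain ⟨i, hi, hi1⟩ := sig_pos vk y hy (by simp)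
      have hz : i = 0 := nodup_index nodup hi h0
      subst hz
      rw [h1] at hi1; exact (Option.some.inj hi1).symm
    have ndd : ∀ y, σ vk1 = some y → y ∈ rest := by
      intro y hy
      obtain ⟨i, hi, hi1⟩ := sig_pos vk1 y hy (by simp)
      have hz : i = 1 := nodup_index nodup hi h1
      subst hz
      have : rest[0]? = some y := by simpa using hi1
      exact List.mem_of_getElem? this
    have eσk : (Function.update (Function.update σ vk1 (some vk)) vk none) vk = none :=
      Function.update_self _ _ _
    have eσk1 : (Function.update (Function.update σ vk1 (some vk)) vk none) vk1 = some vk := by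
      rw [Function.update_of_ne hkk.symm, Function.update_self]
    have eσo : ∀ x, x ≠ vk → x ≠ vk1 →
        (Function.update (Function.update σ vk1 (some vk)) vk none) x = σ x := by
      intro x hx1 hx2
      rw [Function.update_of_ne hx1, Function.update_of_ne hx2]
    have eτk : (Function.update (Function.update τ vk (some vk1)) vk1 none) vk = some vk1 := by
      rw [Function.update_of_ne hkk, Function.update_self]
    have eτk1 : (Function.update (Function.update τ vk (some vk1)) vk1 none) vk1 = none :=
      Function.update_self _ _ _
    have eτo : ∀ x, x ≠ vk → x ≠ vk1 →
        (Function.update (Function.update τ vk (some vk1)) vk1 none) x = τ x := by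
      intro x hx1 hx2
      rw [Function.update_of_ne hx2, Function.update_of_ne hx1]
    -- case split helper on new σ
    have newσ : ∀ x y, (Function.update (Function.update σ vk1 (some vk)) vk none) x = some y →
        (x = vk1 ∧ y = vk) ∨ (x ≠ vk ∧ x ≠ vk1 ∧ σ x = some y ∧ y ≠ vk ∧ y ≠ vk1) := by
      intro x y hxy
      by_cases hx1 : x = vk
      · subst hx1; rw [eσk] at hxy; exact absurd hxy (by simp)
      by_cases hx2 : x = vk1
      · subst hx2; rw [eσk1] at hxy; exact Or.inl ⟨rfl, (Option.some.inj hxy).symm⟩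
      · rw [eσo x hx1 hx2] at hxy
        refine Or.inr ⟨hx1, hx2, hxy, fun hyk => na x (hyk ▸ hxy), fun hyk1 => hx1 (nb x (hyk1 ▸ hxy))⟩
    refine ⟨?_, ?_, ?_, ?_, ?_, ?_, ?_, ?_, ?_⟩ <;> dsimp only
    · exact (List.nodup_cons.mp (List.nodup_cons.mp nodup).2).2
    · exact chain.tail.tail
    · -- sig_adj
      intro x y hxy
      rcases newσ x y hxy with ⟨hx, hy⟩ | ⟨_, _, hold, _, _⟩
      · subst hx; subst hy; exact hA.symm
      · exact sig_adj _ _ hold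
    · -- sig_tau
      intro x y hxy
      rcases newσ x y hxy with ⟨hx, hy⟩ | ⟨hx1, hx2, hold, hy1, hy2⟩
      · subst hx; subst hy; exact eτk
      · rw [eτo y hy1 hy2]; exact sig_tau _ _ hold
    · -- sig_pos
      intro x y hxy hxP
      have hxk : x ≠ vk := fun h => hknr (h ▸ (List.mem_cons_of_mem _ hxP))
      have hxk1 : x ≠ vk1 := fun h => h1nr (h ▸ hxP)
      rcases newσ x y hxy with ⟨hx, _⟩ | ⟨_, _, hold, _, _⟩
      · exact absurd hx hxk1
      · obtain ⟨i, hi, hi1⟩ := sig_pos x y hold (by simp [hxP])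
        match i, hi, hi1 with
        | 0, hi, _ => rw [h0] at hi; exact absurd (Option.some.inj hi).symm hxk
        | 1, hi, _ => rw [h1] at hi; exact absurd (Option.some.inj hi).symm hxk1
        | (n+2), hi, hi1 =>
          refine ⟨n, ?_, ?_⟩
          · simpa using hi
          · simpa using hi1
    · -- sig_off
      intro x y hxy hxP
      rcases newσ x y hxy with ⟨hx, hy⟩ | ⟨hx1, hx2, hold, hy1, hy2⟩
      · subst hy; exact fun hc => hknr (List.mem_cons_of_mem _ hc)
      · have hxnotP : x ∉ vk :: vk1 :: rest := by
          simp only [List.mem_cons, not_or]; exact ⟨hx1, hx2, hxP⟩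
        have := sig_off x y hold hxnotP
        simp only [List.mem_cons, not_or] at this
        exact this.2.2
    · -- sig_sig
      intro x y hxy
      rcases newσ x y hxy with ⟨_, hy⟩ | ⟨_, _, hold, hy1, hy2⟩
      · subst hy; exact eσk
      · rw [eσo y hy1 hy2]; exact sig_sig _ _ hold
    · -- tau_adj
      intro x y hxy
      by_cases hx1 : x = vk
      · subst hx1; rw [eτk] at hxy
        obtain rfl := Option.some.inj hxy
        exact hA
      by_cases hx2 : x = vk1
      · subst hx2; rw [eτk1] at hxy; exact absurd hxy (by simp)
      · rw [eτo x hx1 hx2] at hxy; exact tau_adj _ _ hxy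
    · -- tau_comp
      intro x y hxy hσx hxP
      by_cases hx1 : x = vk
      · subst hx1; rw [eτk] at hxy
        obtain rfl := Option.some.inj hxy
        exact eσk1
      by_cases hx2 : x = vk1
      · subst hx2; rw [eτk1] at hxy; exact absurd hxy (by simp)
      rw [eτo x hx1 hx2] at hxy
      rw [eσo x hx1 hx2] at hσx
      have hxnotP : x ∉ vk :: vk1 :: rest := by
        simp only [List.mem_cons, not_or]; exact ⟨hx1, hx2, hxP⟩
      have hold := tau_comp x y hxy hσx hxnotP
      have hyk : y ≠ vk := fun hc => hx2 (nc x (hc ▸ hold))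
      have hyk1 : y ≠ vk1 := fun hc => hxP (ndd x (hc ▸ hold))
      rw [eσo y hyk hyk1]; exact hold
  | intro_bot vk rest R σ τ z hrest hz hadj hσ hτ =>
    simp only at nodup chain sig_adj sig_tau sig_pos sig_off sig_sig tau_adj tau_comp
    refine ⟨?_, ?_, ?_, ?_, ?_, ?_, ?_, ?_, ?_⟩ <;> dsimp only
    · exact List.nodup_cons.mpr ⟨hz, nodup⟩
    · exact List.isChain_cons_cons.mpr ⟨hadj, chain⟩
    · exact sig_adj
    · exact sig_tau
    · intro x y hxy hxP
      rcases List.mem_cons.mp hxP with rfl | hxP'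
      · rw [hσ] at hxy; exact absurd hxy (by simp)
      · obtain ⟨i, hi, hi1⟩ := sig_pos x y hxy hxP'
        exact ⟨i + 1, by simpa using hi, by simpa using hi1⟩
    · intro x y hxy hxP
      simp only [List.mem_cons, not_or] at hxP
      have hold := sig_off x y hxy (by simp only [List.mem_cons, not_or]; exact ⟨hxP.2.1, hxP.2.2⟩)
      have hyz : y ≠ z := by
        intro hc
        have h2 := sig_tau x y hxy
        rw [hc, hτ] at h2
        exact absurd h2 (by simp)
      simp only [List.mem_cons, not_or] at hold ⊢
      exact ⟨hyz, hold⟩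
    · exact sig_sig
    · exact tau_adj
    · intro x y hxy hσx hxP
      simp only [List.mem_cons, not_or] at hxP
      exact tau_comp x y hxy hσx (by simp only [List.mem_cons, not_or]; exact ⟨hxP.2.1, hxP.2.2⟩)
  | intro_pair vk rest R σ τ z w hrest hz hadj hσ hτ =>
    simp only at nodup chain sig_adj sig_tau sig_pos sig_off sig_sig tau_adj tau_comp
    have hw : σ w = some z := tau_comp z w hτ hσ hz
    have hadjwz : G'.Adj w z := sig_adj _ _ hw
    have hwz : w ≠ z := G'.ne_of_adj hadjwz
    have hwP : w ∉ vk :: rest := by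
      intro hc
      obtain ⟨i, hi, hi1⟩ := sig_pos w z hw hc
      exact hz (List.mem_of_getElem? hi1)
    refine ⟨?_, ?_, ?_, ?_, ?_, ?_, ?_, ?_, ?_⟩ <;> dsimp only
    · have hwP2 : w ≠ vk ∧ w ∉ rest := by simpa [List.mem_cons, not_or] using hwP
      have hwP3 : w ∉ z :: vk :: rest := by
        simp only [List.mem_cons, not_or]
        exact ⟨hwz, hwP2.1, hwP2.2⟩
      exact List.nodup_cons.mpr ⟨hwP3, List.nodup_cons.mpr ⟨hz, nodup⟩⟩
    · exact List.isChain_cons_cons.mpr ⟨hadjwz, List.isChain_cons_cons.mpr ⟨hadj, chain⟩⟩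
    · exact sig_adj
    · exact sig_tau
    · intro x y hxy hxP
      rcases List.mem_cons.mp hxP with rfl | hxP'
      · rw [hw] at hxy
        obtain rfl := Option.some.inj hxy
        exact ⟨0, by simp, by simp⟩
      rcases List.mem_cons.mp hxP' with rfl | hxP''
      · rw [hσ] at hxy; exact absurd hxy (by simp)
      · obtain ⟨i, hi, hi1⟩ := sig_pos x y hxy hxP''
        exact ⟨i + 2, by simpa using hi, by simpa using hi1⟩
    · intro x y hxy hxP
      simp only [List.mem_cons, not_or] at hxP
      have hold := sig_off x y hxy (by simp only [List.mem_cons, not_or]; exact hxP.2.2)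
      have hyz : y ≠ z := by
        intro hc
        have h2 := sig_tau x y hxy
        rw [hc, hτ] at h2
        exact hxP.1 (Option.some.inj h2).symm
      have hyw : y ≠ w := by
        intro hc
        have h2 := sig_sig x y hxy
        rw [hc, hw] at h2
        exact absurd h2 (by simp)
      simp only [List.mem_cons, not_or] at hold ⊢
      exact ⟨hyw, hyz, hold⟩
    · exact sig_sig
    · exact tau_adj
    · intro x y hxy hσx hxP
      simp only [List.mem_cons, not_or] at hxP
      exact tau_comp x y hxy hσx (by simp only [List.mem_cons, not_or]; exact hxP.2.2)


theorem lstep_rec {l : W × Option W} {s s' : AlgState W} (h : LStep G' l s s') :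
    (∃ vk vk1 rest, s.P = vk :: vk1 :: rest ∧ l = (vk1, some vk) ∧
      s'.P = rest ∧ s'.R = s.R ∧
      s'.σ = Function.update (Function.update s.σ vk1 (some vk)) vk none ∧
      s'.τ = Function.update (Function.update s.τ vk (some vk1)) vk1 none) ∨
    (∃ vk rest z, rest ≠ [] ∧ z ∉ vk :: rest ∧ G'.Adj z vk ∧ s.σ z = none ∧ s.τ z = none ∧
      s.P = vk :: rest ∧ l = (z, none) ∧ s'.P = z :: vk :: rest ∧ s'.R = insert z s.R ∧
      s'.σ = s.σ ∧ s'.τ = s.τ) ∨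
    (∃ vk rest z w, rest ≠ [] ∧ z ∉ vk :: rest ∧ G'.Adj z vk ∧ s.σ z = none ∧
      s.τ z = some w ∧
      s.P = vk :: rest ∧ l = (z, some w) ∧ s'.P = w :: z :: vk :: rest ∧ s'.R = insert z s.R ∧
      s'.σ = s.σ ∧ s'.τ = s.τ) := by
  cases h with
  | del vk vk1 rest R σ τ hZ =>
    exact Or.inl ⟨vk, vk1, rest, rfl, rfl, rfl, rfl, rfl, rfl⟩
  | intro_bot vk rest R σ τ z hrest hz hadj hσ hτ =>
    exact Or.inr (Or.inl ⟨vk, rest, z, hrest, hz, hadj, hσ, hτ, rfl, rfl, rfl, rfl, rfl, rfl⟩)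
  | intro_pair vk rest R σ τ z w hrest hz hadj hσ hτ =>
    exact Or.inr (Or.inr ⟨vk, rest, z, w, hrest, hz, hadj, hσ, hτ, rfl, rfl, rfl, rfl, rfl, rfl⟩)


/-- `z` has been touched. -/
def Qp (s : AlgState W) (z : W) : Prop := z ∈ s.P ∨ s.σ z ≠ none ∨ s.τ z ≠ none

theorem Qp_step {l : W × Option W} {s s' : AlgState W} (hInv : Inv G' s)
    (h : LStep G' l s s') (z : W)
    (hq : Qp s z) : Qp s' z := by
  rcases lstep_rec h with ⟨vk, vk1, rest, hP, hl, hP', hR', hσ', hτ'⟩ |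
    ⟨vk, rest, zz, hrest, hz, hadj, hσz, hτz, hP, hl, hP', hR', hσ', hτ'⟩ |
    ⟨vk, rest, zz, w, hrest, hz, hadj, hσz, hτz, hP, hl, hP', hR', hσ', hτ'⟩
  · by_cases h1 : z = vk
    · refine Or.inr (Or.inr ?_)
      have hchain := hInv.chain
      rw [hP] at hchain
      have hkk : vk ≠ vk1 := G'.ne_of_adj (List.isChain_cons_cons.mp hchain).1
      rw [hτ', h1]
      rw [Function.update_of_ne hkk, Function.update_self]; simp
    by_cases h2 : z = vk1
    · refine Or.inr (Or.inl ?_)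
      rw [hσ', h2]
      rw [Function.update_of_ne (fun hc => h1 (h2.trans hc)), Function.update_self]
      simp
    · rcases hq with hm | hσq | hτq
      · rw [hP] at hm
        rcases List.mem_cons.mp hm with rfl | hm'
        · exact absurd rfl h1
        rcases List.mem_cons.mp hm' with rfl | hm''
        · exact absurd rfl h2
        · exact Or.inl (hP' ▸ hm'')
      · refine Or.inr (Or.inl ?_)
        rw [hσ', Function.update_of_ne h1, Function.update_of_ne h2]; exact hσq
      · refine Or.inr (Or.inr ?_)
        rw [hτ', Function.update_of_ne h2, Function.update_of_ne h1]; exact hτq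
  · rcases hq with hm | hσq | hτq
    · exact Or.inl (by rw [hP']; exact List.mem_cons_of_mem _ (hP ▸ hm))
    · exact Or.inr (Or.inl (hσ' ▸ hσq))
    · exact Or.inr (Or.inr (hτ' ▸ hτq))
  · rcases hq with hm | hσq | hτq
    · exact Or.inl (by rw [hP']; exact List.mem_cons_of_mem _ (List.mem_cons_of_mem _ (hP ▸ hm)))
    · exact Or.inr (Or.inl (hσ' ▸ hσq))
    · exact Or.inr (Or.inr (hτ' ▸ hτq))

section Exec

variable (D : Set ℕ) (seq : ℕ → AlgState W) (lab : ℕ → W × Option W)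

theorem exec_inv {x0 x1 : W} (hne01 : x1 ≠ x0) (hadj01 : G'.Adj x1 x0)
    (h0 : seq 0 = initState x0 x1)
    (hstep : ∀ i ∈ D, LStep G' (lab i) (seq i) (seq (i + 1))) :
    ∀ t, (∀ s, s < t → s ∈ D) → Inv G' (seq t) := by
  intro t
  induction t with
  | zero => intro _; rw [h0]; exact inv_init hne01 hadj01
  | succ n ih =>
    intro hpre
    exact inv_preserved (ih fun s hs => hpre s (by omega)) (hstep n (hpre n (by omega)))

theorem exec_len (hstep : ∀ i ∈ D, LStep G' (lab i) (seq i) (seq (i + 1))) :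
    ∀ i ∈ D, ∃ a b r, (seq i).P = a :: b :: r := by
  intro i hi
  rcases lstep_rec (hstep i hi) with ⟨vk, vk1, rest, hP, _⟩ |
    ⟨vk, rest, z, hrest, _, _, _, _, hP, _⟩ | ⟨vk, rest, z, w, hrest, _, _, _, _, hP, _⟩
  · exact ⟨vk, vk1, rest, hP⟩
  · obtain ⟨c, r', rfl⟩ : ∃ c r', rest = c :: r' := by
      cases rest with
      | nil => exact absurd rfl hrest
      | cons c r' => exact ⟨c, r', rfl⟩
    exact ⟨vk, c, r', hP⟩
  · obtain ⟨c, r', rfl⟩ : ∃ c r', rest = c :: r' := by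
      cases rest with
      | nil => exact absurd rfl hrest
      | cons c r' => exact ⟨c, r', rfl⟩
    exact ⟨vk, c, r', hP⟩

theorem exec_Qmono {x0 x1 : W} (hne01 : x1 ≠ x0) (hadj01 : G'.Adj x1 x0)
    (h0 : seq 0 = initState x0 x1)
    (hstep : ∀ i ∈ D, LStep G' (lab i) (seq i) (seq (i + 1))) (z : W) :
    ∀ a b, a ≤ b → (∀ s, s < b → s ∈ D) → Qp (seq a) z → Qp (seq b) z := by
  intro a b hab
  induction b, hab using Nat.le_induction with
  | base => exact fun _ h => h
  | succ n hn ih =>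
    intro hpre hq
    have hInv : Inv G' (seq n) :=
      exec_inv D seq lab hne01 hadj01 h0 hstep n (fun s hs => hpre s (by omega))
    exact Qp_step hInv (hstep n (hpre n (by omega))) z (ih (fun s hs => hpre s (by omega)) hq)

theorem frozen_step (v : W)
    (hstep : ∀ i ∈ D, LStep G' (lab i) (seq i) (seq (i + 1))) (t : ℕ) (ht : t ∈ D)
    (hnc : ¬ PairContains (lab t) v) :
    (seq (t+1)).σ v = (seq t).σ v ∧ (seq (t+1)).τ v = (seq t).τ v ∧
      ((v ∈ (seq (t+1)).P) ↔ v ∈ (seq t).P) := by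
  rcases lstep_rec (hstep t ht) with ⟨vk, vk1, rest, hP, hl, hP', hR', hσ', hτ'⟩ |
    ⟨vk, rest, z, hrest, hz, hadj, hσz, hτz, hP, hl, hP', hR', hσ', hτ'⟩ |
    ⟨vk, rest, z, w, hrest, hz, hadj, hσz, hτz, hP, hl, hP', hR', hσ', hτ'⟩
  · rw [hl] at hnc
    simp only [PairContains, not_or] at hnc
    have hv1 : v ≠ vk1 := fun hc => hnc.1 (by rw [hc])
    have hv2 : v ≠ vk := fun hc => hnc.2 (by rw [hc])
    refine ⟨?_, ?_, ?_⟩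
    · rw [hσ', Function.update_of_ne hv2, Function.update_of_ne hv1]
    · rw [hτ', Function.update_of_ne hv1, Function.update_of_ne hv2]
    · rw [hP', hP]; simp [hv1, hv2]
  · rw [hl] at hnc
    simp only [PairContains, not_or] at hnc
    have hv : v ≠ z := fun hc => hnc.1 (by rw [hc])
    refine ⟨by rw [hσ'], by rw [hτ'], ?_⟩
    rw [hP', hP]; simp [hv]
  · rw [hl] at hnc
    simp only [PairContains, not_or] at hnc
    have hv : v ≠ z := fun hc => hnc.1 (by rw [hc])
    have hvw : v ≠ w := fun hc => hnc.2 (by rw [hc])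
    refine ⟨by rw [hσ'], by rw [hτ'], ?_⟩
    rw [hP', hP]; simp [hv, hvw]

theorem frozen_iv (v : W)
    (hstep : ∀ i ∈ D, LStep G' (lab i) (seq i) (seq (i + 1))) :
    ∀ a b, a ≤ b → (∀ s, s < b → s ∈ D) →
    (∀ s, a ≤ s → s < b → ¬ PairContains (lab s) v) →
    (seq b).σ v = (seq a).σ v ∧ (seq b).τ v = (seq a).τ v ∧
      ((v ∈ (seq b).P) ↔ v ∈ (seq a).P) := by
  intro a b hab
  induction b, hab using Nat.le_induction with
  | base => exact fun _ _ => ⟨rfl, rfl, Iff.rfl⟩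
  | succ n hn ih =>
    intro hpre hnc
    obtain ⟨h1, h2, h3⟩ := ih (fun s hs => hpre s (by omega)) (fun s h1 h2 => hnc s h1 (by omega))
    obtain ⟨g1, g2, g3⟩ := frozen_step D seq lab v hstep n (hpre n (by omega))
      (hnc n hn (by omega))
    exact ⟨g1.trans h1, g2.trans h2, g3.trans h3⟩

theorem head_iv {x0 x1 : W} (φ : W → Bool) (hφ : ∀ a b, G'.Adj a b → φ b = !φ a)
    (hne01 : x1 ≠ x0) (hadj01 : G'.Adj x1 x0)
    (hD : ∀ ⦃i j : ℕ⦄, i ≤ j → j ∈ D → i ∈ D)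
    (h0 : seq 0 = initState x0 x1)
    (hstep : ∀ i ∈ D, LStep G' (lab i) (seq i) (seq (i + 1))) :
    ∀ a b, a ≤ b → (∀ s, s ≤ b → s ∈ D) →
    (∀ s, a ≤ s → s < b → (lab s).2 ≠ none) →
    (seq b).P.head?.map φ = (seq a).P.head?.map φ := by
  intro a b hab
  induction b, hab using Nat.le_induction with
  | base => exact fun _ _ => rfl
  | succ n hn ih =>
    intro hpre hnb
    have hIH := ih (fun s hs => hpre s (by omega)) (fun s h1 h2 => hnb s h1 (by omega))
    rw [← hIH]
    have hInv : Inv G' (seq n) :=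
      exec_inv D seq lab hne01 hadj01 h0 hstep n (fun s hs => hpre s (by omega))
    rcases lstep_rec (hstep n (hpre n (by omega))) with ⟨vk, vk1, rest, hP, hl, hP', hR', hσ', hτ'⟩ |
      ⟨vk, rest, z, hrest, hz, hadj, hσz, hτz, hP, hl, hP', hR', hσ', hτ'⟩ |
      ⟨vk, rest, z, w, hrest, hz, hadj, hσz, hτz, hP, hl, hP', hR', hσ', hτ'⟩
    · -- deletion : head color preserved using the chain
      obtain ⟨a', b', r', hP''⟩ := exec_len D seq lab hstep (n+1) (hpre (n+1) le_rfl)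
      have hrest' : rest = a' :: b' :: r' := by rw [← hP', hP'']
      have hchain := hInv.chain
      rw [hP, hrest'] at hchain
      have hA1 : G'.Adj vk vk1 := (List.isChain_cons_cons.mp hchain).1
      have hA2 : G'.Adj vk1 a' := (List.isChain_cons_cons.mp (List.isChain_cons_cons.mp hchain).2).1
      have : φ a' = φ vk := by
        rw [hφ _ _ hA2, hφ _ _ hA1, Bool.not_not]
      rw [hP', hrest', hP]
      simp [this]
    · exact absurd (by rw [hl]) (hnb n hn (by omega))
    · -- intro_pair : head color preserved
      have hw : (seq n).σ w = some z := hInv.tau_comp z w hτz hσz (hP ▸ hz)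
      have hAwz : G'.Adj w z := hInv.sig_adj _ _ hw
      have : φ w = φ vk := by
        rw [hφ _ _ hadj, hφ _ _ hAwz, Bool.not_not]
      rw [hP', hP]
      simp [this]

theorem key_lemma {x0 x1 : W} (φ : W → Bool) (hφ : ∀ a b, G'.Adj a b → φ b = !φ a)
    (hne01 : x1 ≠ x0) (hadj01 : G'.Adj x1 x0)
    (hD : ∀ ⦃i j : ℕ⦄, i ≤ j → j ∈ D → i ∈ D)
    (h0 : seq 0 = initState x0 x1)
    (hstep : ∀ i ∈ D, LStep G' (lab i) (seq i) (seq (i + 1)))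
    (v : W) {e e' : ℕ} (he : e ∈ D) (hc : PairContains (lab e) v)
    (he' : e' ∈ D) (hc' : PairContains (lab e') v) (hlt : e < e')
    (hcons : ∀ t, e < t → t < e' → t ∈ D → ¬ PairContains (lab t) v) :
    (v ∈ (seq e).P → (v ∉ (seq e').P ∧ ∃ t, e < t ∧ t < e' ∧ t ∈ D ∧ (lab t).2 = none))
    ∧ (v ∉ (seq e).P → v ∈ (seq e').P) := by
  have hpre' : ∀ s, s < e' → s ∈ D := fun s hs => hD hs.le he'
  have he1D : e + 1 ∈ D := hD hlt he'
  have he1le : e + 1 ≤ e' := hlt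
  have hInv_e : Inv G' (seq e) :=
    exec_inv D seq lab hne01 hadj01 h0 hstep e (fun s hs => hD hs.le he)
  have hInv_e' : Inv G' (seq e') :=
    exec_inv D seq lab hne01 hadj01 h0 hstep e' (fun s hs => hD hs.le he')
  have hfroz := frozen_iv D seq lab v hstep (e+1) e' he1le hpre'
    (fun s h1 h2 => hcons s (by omega) h2 (hpre' s h2))
  obtain ⟨hfσ, hfτ, hfP⟩ := hfroz
  constructor
  · -- v ∈ P e : step e is a deletion
    intro hvP
    rcases lstep_rec (hstep e he) with ⟨vk, vk1, rest, hP, hl, hP', hR', hσ', hτ'⟩ |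
      ⟨vk, rest, z, hrest, hz, hadj, hσz, hτz, hP, hl, hP', hR', hσ', hτ'⟩ |
      ⟨vk, rest, z, w, hrest, hz, hadj, hσz, hτz, hP, hl, hP', hR', hσ', hτ'⟩
    · -- deletion case (the main one)
      rw [hl] at hc
      simp only [PairContains, Option.some.injEq] at hc
      -- basic facts at e
      have hchain := hInv_e.chain
      have hnodup := hInv_e.nodup
      rw [hP] at hchain hnodup
      have hA1 : G'.Adj vk vk1 := (List.isChain_cons_cons.mp hchain).1
      have hkk : vk ≠ vk1 := G'.ne_of_adj hA1
      have hknr : vk ∉ vk1 :: rest := (List.nodup_cons.mp hnodup).1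
      have h1nr : vk1 ∉ rest := (List.nodup_cons.mp (List.nodup_cons.mp hnodup).2).1
      -- v not in P (e+1)
      have hvP1 : v ∉ (seq (e+1)).P := by
        rw [hP']
        rcases hc with rfl | rfl
        · exact h1nr
        · exact fun hc2 => hknr (List.mem_cons_of_mem _ hc2)
      have hvPe' : v ∉ (seq e').P := fun hc2 => hvP1 (hfP.mp hc2)
      refine ⟨hvPe', ?_⟩
      -- σ, τ of v at e+1
      have hστ1 : ((seq (e+1)).σ v = none ∧ (seq (e+1)).τ v = some vk1 ∧ v = vk) ∨
          ((seq (e+1)).σ v = some vk ∧ (seq (e+1)).τ v = none ∧ v = vk1) := by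
        rcases hc with rfl | rfl
        · right
          refine ⟨?_, ?_, rfl⟩
          · rw [hσ', Function.update_of_ne (Ne.symm hkk), Function.update_self]
          · rw [hτ', Function.update_self]
        · left
          refine ⟨?_, ?_, rfl⟩
          · rw [hσ', Function.update_self]
          · rw [hτ', Function.update_of_ne hkk, Function.update_self]
      -- suppose no intro_bot between
      by_contra hnob
      push_neg at hnob
      have hnb : ∀ s, e + 1 ≤ s → s < e' → (lab s).2 ≠ none := by
        intro s h1 h2 hn
        exact hnob s (by omega) h2 (hpre' s h2) hn
      -- head colour is constant on [e+1, e']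
      have hhead := head_iv D seq lab φ hφ hne01 hadj01 hD h0 hstep (e+1) e' he1le
        (fun s hs => hD hs he') hnb
      -- compute head at e+1
      obtain ⟨a, b, r, hPr⟩ := exec_len D seq lab hstep (e+1) he1D
      have hrest : rest = a :: b :: r := by rw [← hP', hPr]
      have hA2 : G'.Adj vk1 a := by
        rw [hrest] at hchain
        exact (List.isChain_cons_cons.mp (List.isChain_cons_cons.mp hchain).2).1
      have hφa : φ a = φ vk := by rw [hφ _ _ hA2, hφ _ _ hA1, Bool.not_not]
      have hhead1 : (seq (e+1)).P.head?.map φ = some (φ vk) := by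
        rw [hPr]; simp [hφa]
      have hheade' : (seq e').P.head?.map φ = some (φ vk) := by rw [hhead, hhead1]
      -- analyse step e'
      rcases lstep_rec (hstep e' he') with ⟨vk', vk1', rest', hP2, hl2, _⟩ |
        ⟨vk', rest', z', hrest', hz', hadj', hσz', hτz', hP2, hl2, _⟩ |
        ⟨vk', rest', z', w', hrest', hz', hadj', hσz', hτz', hP2, hl2, _⟩
      · -- deletion at e' : v would be in P e'
        rw [hl2] at hc'
        simp only [PairContains, Option.some.injEq] at hc'
        apply hvPe'
        rw [hP2]
        rcases hc' with rfl | rfl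
        · exact List.mem_cons_of_mem _ (List.mem_cons_self)
        · exact List.mem_cons_self
      · -- intro_bot at e' : impossible since σ/τ of v is not both none
        rw [hl2] at hc'
        simp only [PairContains] at hc'
        have hzv : z' = v := by
          rcases hc' with h | h
          · exact h
          · exact absurd h (by simp)
        rw [hzv] at hσz' hτz'
        rw [hfσ] at hσz'
        rw [hfτ] at hτz'
        rcases hστ1 with ⟨_, ht, _⟩ | ⟨hs, _, _⟩
        · rw [ht] at hτz'; exact absurd hτz' (by simp)
        · rw [hs] at hσz'; exact absurd hσz' (by simp)
      · -- intro_pair at e' : head colour contradiction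
        rw [hl2] at hc'
        simp only [PairContains, Option.some.injEq] at hc'
        have hzvk : z' = vk := by
          rcases hc' with hzz | hww
          · rw [hzz, hfσ] at hσz'
            rw [hzz, hfτ] at hτz'
            rcases hστ1 with ⟨_, _, hvvk⟩ | ⟨hs, _, _⟩
            · rw [hzz, hvvk]
            · rw [hs] at hσz'; exact absurd hσz' (by simp)
          · have hw' : (seq e').σ w' = some z' :=
              hInv_e'.tau_comp z' w' hτz' hσz' (hP2 ▸ hz')
            rw [hww, hfσ] at hw'
            rcases hστ1 with ⟨hs, _, _⟩ | ⟨hs, _, _⟩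
            · rw [hs] at hw'; exact absurd hw' (by simp)
            · rw [hs] at hw'; exact (Option.some.inj hw').symm
        -- head of P e' is vk', adjacent to z' = vk
        have : φ vk' = !φ vk := by rw [← hzvk, ← hφ _ _ hadj']
        rw [hP2] at hheade'
        simp only [List.head?_cons, Option.map_some] at hheade'
        rw [this] at hheade'
        have := Option.some.inj hheade'
        simp at this
    · -- intro_bot at e : v = z ∉ P e, contradiction
      rw [hl] at hc
      simp only [PairContains] at hc
      have hzv : z = v := by
        rcases hc with h | h
        · exact h
        · exact absurd h (by simp)
      rw [← hzv] at hvP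
      rw [hP] at hvP
      exact absurd hvP hz
    · -- intro_pair at e : v ∈ {z, w}, both off P e, contradiction
      rw [hl] at hc
      simp only [PairContains, Option.some.injEq] at hc
      have hw : (seq e).σ w = some z := hInv_e.tau_comp z w hτz hσz (hP ▸ hz)
      have hwP : w ∉ (seq e).P := by
        intro hcw
        obtain ⟨i, hi, hi1⟩ := hInv_e.sig_pos w z hw hcw
        exact (hP ▸ hz) (List.mem_of_getElem? hi1)
      rcases hc with rfl | rfl
      · exact absurd (hP ▸ hvP) hz
      · exact absurd hvP hwP
  · -- v ∉ P e : step e is an introduction, v ∈ P (e+1), persists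
    intro hvP
    have hmem1 : v ∈ (seq (e+1)).P := by
      rcases lstep_rec (hstep e he) with ⟨vk, vk1, rest, hP, hl, hP', hR', hσ', hτ'⟩ |
        ⟨vk, rest, z, hrest, hz, hadj, hσz, hτz, hP, hl, hP', hR', hσ', hτ'⟩ |
        ⟨vk, rest, z, w, hrest, hz, hadj, hσz, hτz, hP, hl, hP', hR', hσ', hτ'⟩
      · rw [hl] at hc
        simp only [PairContains, Option.some.injEq] at hc
        exfalso; apply hvP
        rw [hP]
        rcases hc with rfl | rfl
        · exact List.mem_cons_of_mem _ (List.mem_cons_self)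
        · exact List.mem_cons_self
      · rw [hl] at hc
        simp only [PairContains] at hc
        have hzv : z = v := by
          rcases hc with h | h
          · exact h
          · exact absurd h (by simp)
        rw [hP', hzv]
        exact List.mem_cons_self
      · rw [hl] at hc
        simp only [PairContains, Option.some.injEq] at hc
        rw [hP']
        rcases hc with rfl | rfl
        · exact List.mem_cons_of_mem _ (List.mem_cons_self)
        · exact List.mem_cons_self
    exact hfP.mpr hmem1

theorem bot_step_data (hstep : ∀ i ∈ D, LStep G' (lab i) (seq i) (seq (i + 1)))
    (t : ℕ) (ht : t ∈ D) (hb : (lab t).2 = none) :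
    ¬ Qp (seq t) (lab t).1 ∧ Qp (seq (t+1)) (lab t).1 := by
  rcases lstep_rec (hstep t ht) with ⟨vk, vk1, rest, hP, hl, hP', hR', hσ', hτ'⟩ |
    ⟨vk, rest, z, hrest, hz, hadj, hσz, hτz, hP, hl, hP', hR', hσ', hτ'⟩ |
    ⟨vk, rest, z, w, hrest, hz, hadj, hσz, hτz, hP, hl, hP', hR', hσ', hτ'⟩
  · rw [hl] at hb; exact absurd hb (by simp)
  · have h1 : (lab t).1 = z := by rw [hl]
    rw [h1]
    constructor
    · intro hq
      rcases hq with hm | hσq | hτq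
      · exact (hP ▸ hz) hm
      · exact hσq hσz
      · exact hτq hτz
    · exact Or.inl (by rw [hP']; exact List.mem_cons_self)
  · rw [hl] at hb; exact absurd hb (by simp)

theorem bots_unique {x0 x1 : W} (hne01 : x1 ≠ x0) (hadj01 : G'.Adj x1 x0)
    (hD : ∀ ⦃i j : ℕ⦄, i ≤ j → j ∈ D → i ∈ D)
    (h0 : seq 0 = initState x0 x1)
    (hstep : ∀ i ∈ D, LStep G' (lab i) (seq i) (seq (i + 1)))
    {t t' : ℕ} (htt : t < t') (ht : t ∈ D) (ht' : t' ∈ D)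
    (hb : (lab t).2 = none) (hb' : (lab t').2 = none)
    (heq : (lab t).1 = (lab t').1) : False := by
  have h1 := (bot_step_data D seq lab hstep t ht hb).2
  have h2 := (bot_step_data D seq lab hstep t' ht' hb').1
  apply h2
  rw [← heq]
  exact exec_Qmono D seq lab hne01 hadj01 h0 hstep (lab t).1 (t+1) t' htt
    (fun s hs => hD hs.le ht') h1

theorem bots_ne_init {x0 x1 : W} (hne01 : x1 ≠ x0) (hadj01 : G'.Adj x1 x0)
    (hD : ∀ ⦃i j : ℕ⦄, i ≤ j → j ∈ D → i ∈ D)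
    (h0 : seq 0 = initState x0 x1)
    (hstep : ∀ i ∈ D, LStep G' (lab i) (seq i) (seq (i + 1)))
    {t : ℕ} (ht : t ∈ D) (hb : (lab t).2 = none) :
    (lab t).1 ≠ x0 ∧ (lab t).1 ≠ x1 := by
  constructor <;> intro hc
  · apply (bot_step_data D seq lab hstep t ht hb).1
    rw [hc]
    apply exec_Qmono D seq lab hne01 hadj01 h0 hstep x0 0 t (by omega)
      (fun s hs => hD hs.le ht)
    rw [h0]
    exact Or.inl (by simp [initState])
  · apply (bot_step_data D seq lab hstep t ht hb).1
    rw [hc]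
    apply exec_Qmono D seq lab hne01 hadj01 h0 hstep x1 0 t (by omega)
      (fun s hs => hD hs.le ht)
    rw [h0]
    exact Or.inl (by simp [initState])

theorem main_bound [Fintype W] {x0 x1 : W} (φ : W → Bool)
    (hφ : ∀ a b, G'.Adj a b → φ b = !φ a)
    (hne01 : x1 ≠ x0) (hadj01 : G'.Adj x1 x0)
    (hD : ∀ ⦃i j : ℕ⦄, i ≤ j → j ∈ D → i ∈ D)
    (h0 : seq 0 = initState x0 x1)
    (hstep : ∀ i ∈ D, LStep G' (lab i) (seq i) (seq (i + 1)))
    (v : W) :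
    {i | i ∈ D ∧ PairContains (lab i) v}.Finite ∧
    {i | i ∈ D ∧ PairContains (lab i) v}.ncard ≤ 2 * Fintype.card W := by
  classical
  set n := Fintype.card W with hn
  have hn2 : 2 ≤ n := Fintype.one_lt_card_iff_nontrivial.mpr ⟨⟨x1, x0, hne01⟩⟩
  set T : Set ℕ := {i | i ∈ D ∧ PairContains (lab i) v} with hT
  set B : Set ℕ := {t | t ∈ D ∧ (lab t).2 = none} with hB
  have hBinj : Set.InjOn (fun t => (lab t).1) B := by
    intro t ht t' ht' heq
    by_contra hne
    rcases Ne.lt_or_gt hne with h | h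
    · exact bots_unique D seq lab hne01 hadj01 hD h0 hstep h ht.1 ht'.1 ht.2 ht'.2 heq
    · exact bots_unique D seq lab hne01 hadj01 hD h0 hstep h ht'.1 ht.1 ht'.2 ht.2 heq.symm
  have hBfin : B.Finite := Set.Finite.of_finite_image (Set.toFinite _) hBinj
  have hBcard : B.ncard ≤ n - 2 := by
    have h1 : B.ncard = ((fun t => (lab t).1) '' B).ncard :=
      (Set.ncard_image_of_injOn hBinj).symm
    have him : (fun t => (lab t).1) '' B ⊆ ({x0, x1} : Set W)ᶜ := by
      rintro x ⟨t, ht, rfl⟩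
      have := bots_ne_init D seq lab hne01 hadj01 hD h0 hstep ht.1 ht.2
      simp only [Set.mem_compl_iff, Set.mem_insert_iff, Set.mem_singleton_iff, not_or]
      exact this
    have h2 : ((fun t => (lab t).1) '' B).ncard ≤ (({x0, x1} : Set W)ᶜ).ncard :=
      Set.ncard_le_ncard him (Set.toFinite _)
    have h3 : (({x0, x1} : Set W)ᶜ).ncard = n - 2 := by
      have := Set.ncard_add_ncard_compl ({x0, x1} : Set W)
      rw [Set.ncard_pair (Ne.symm hne01), Nat.card_eq_fintype_card] at this
      omega
    omega
  -- the bot-count function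
  set bc : ℕ → ℕ := fun e => {t | t ∈ D ∧ t < e ∧ (lab t).2 = none}.ncard with hbc
  have hsubB : ∀ e, {t | t ∈ D ∧ t < e ∧ (lab t).2 = none} ⊆ B := by
    intro e t ⟨h1, _, h3⟩; exact ⟨h1, h3⟩
  have hbcfin : ∀ e, {t | t ∈ D ∧ t < e ∧ (lab t).2 = none}.Finite :=
    fun e => hBfin.subset (hsubB e)
  have hbc_le : ∀ e, bc e ≤ n - 2 :=
    fun e => le_trans (Set.ncard_le_ncard (hsubB e) hBfin) hBcard
  have hbc_mono : ∀ e e', e ≤ e' → bc e ≤ bc e' := by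
    intro e e' h
    apply Set.ncard_le_ncard _ (hbcfin e')
    intro t ⟨h1, h2, h3⟩
    exact ⟨h1, by omega, h3⟩
  have hbc_strict : ∀ e e' t, t ∈ D → e ≤ t → t < e' → (lab t).2 = none → bc e < bc e' := by
    intro e e' t htD het hte' hbot
    have hnotmem : t ∉ {s | s ∈ D ∧ s < e ∧ (lab s).2 = none} := by
      intro ⟨_, h2, _⟩; omega
    have hins : insert t {s | s ∈ D ∧ s < e ∧ (lab s).2 = none} ⊆
        {s | s ∈ D ∧ s < e' ∧ (lab s).2 = none} := by
      rintro s (rfl | ⟨h1, h2, h3⟩)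
      · exact ⟨htD, by omega, hbot⟩
      · exact ⟨h1, by omega, h3⟩
    have := Set.ncard_le_ncard hins (hbcfin e')
    rw [Set.ncard_insert_of_notMem hnotmem (hbcfin e)] at this
    have hbceq : bc e = {s | s ∈ D ∧ s < e ∧ (lab s).2 = none}.ncard := rfl
    have hbceq' : bc e' = {s | s ∈ D ∧ s < e' ∧ (lab s).2 = none}.ncard := rfl
    omega
  set F : ℕ → ℕ := fun e => 2 * bc e + (if v ∈ (seq e).P then 1 else 0) with hF
  -- consecutive elements of T
  have hconsec : ∀ e, e ∈ T → ∀ e', e' ∈ T → e < e' →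
      (∀ t, e < t → t < e' → t ∉ T) → F e < F e' := by
    intro e he e' he' hlt hmid
    have hkey := key_lemma D seq lab φ hφ hne01 hadj01 hD h0 hstep v he.1 he.2 he'.1 he'.2 hlt
      (fun t h1 h2 htD hcont => hmid t h1 h2 ⟨htD, hcont⟩)
    by_cases hv : v ∈ (seq e).P
    · obtain ⟨hnv, t, ht1, ht2, ht3, ht4⟩ := hkey.1 hv
      have h1 : bc e + 1 ≤ bc e' := hbc_strict e e' t ht3 (by omega) ht2 ht4
      simp only [hF, if_pos hv, if_neg hnv]
      omega
    · have hv' : v ∈ (seq e').P := hkey.2 hv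
      have h1 : bc e ≤ bc e' := hbc_mono e e' (by omega)
      simp only [hF, if_pos hv', if_neg hv]
      omega
  -- strict monotonicity of F on T
  have hmono : ∀ e', e' ∈ T → ∀ e, e ∈ T → e < e' → F e < F e' := by
    intro e'
    induction e' using Nat.strong_induction_on with
    | _ e' ih =>
      intro he' e he hlt
      by_cases hmid : ∃ t, t ∈ T ∧ e < t ∧ t < e'
      · have hne : (Finset.filter (fun t => t ∈ T) (Finset.Ioo e e')).Nonempty := by
          obtain ⟨t, ht, h1, h2⟩ := hmid
          exact ⟨t, by simp [Finset.mem_filter, Finset.mem_Ioo, ht, h1, h2]⟩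
        set m := (Finset.filter (fun t => t ∈ T) (Finset.Ioo e e')).max' hne with hm
        have hmmem := (Finset.filter (fun t => t ∈ T) (Finset.Ioo e e')).max'_mem hne
        simp only [Finset.mem_filter, Finset.mem_Ioo] at hmmem
        obtain ⟨⟨hem, hme'⟩, hmT⟩ := hmmem
        have hstep1 : F m < F e' := by
          apply hconsec m hmT e' he' hme'
          intro u h1 h2 huT
          have : u ≤ m := Finset.le_max' _ u (by
            simp only [Finset.mem_filter, Finset.mem_Ioo]
            exact ⟨⟨by omega, h2⟩, huT⟩)
          omega
        have hstep2 : F e < F m := ih m hme' hmT e he hem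
        omega
      · exact hconsec e he e' he' hlt (fun t h1 h2 ht => hmid ⟨t, ht, h1, h2⟩)
  -- F is injective on T and bounded
  have hFbound : ∀ e ∈ T, F e < 2 * n - 2 := by
    intro e _
    have h1 := hbc_le e
    simp only [hF]
    by_cases hv : v ∈ (seq e).P <;> simp [hv] <;> omega
  have hinj : Set.InjOn F T := by
    intro a ha b hb heq
    by_contra hne
    rcases Ne.lt_or_gt hne with h | h
    · exact absurd heq (Nat.ne_of_lt (hmono b hb a ha h))
    · exact absurd heq.symm (Nat.ne_of_lt (hmono a ha b hb h))
  have him : F '' T ⊆ Set.Iio (2 * n - 2) := by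
    rintro x ⟨e, he, rfl⟩
    exact hFbound e he
  have hTfin : T.Finite :=
    Set.Finite.of_finite_image ((Set.finite_Iio (2 * n - 2)).subset him) hinj
  refine ⟨hTfin, ?_⟩
  have h1 : T.ncard = (F '' T).ncard := (Set.ncard_image_of_injOn hinj).symm
  have h2 : (F '' T).ncard ≤ (Set.Iio (2 * n - 2)).ncard :=
    Set.ncard_le_ncard him (Set.finite_Iio _)
  have h3 : (Set.Iio (2 * n - 2)).ncard = 2 * n - 2 := by
    rw [Set.ncard_eq_toFinset_card']; simp
  show T.ncard ≤ 2 * n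
  omega

end Exec

end Stmt7Aux

/-- Lemma 2: let `n` be the number of vertices of `G'`.  Consider any (finite or
infinite) execution of the transition system starting from the initial state; the
execution is given by its downward-closed set `D ⊆ ℕ` of step indices, its states
`seq i` and the label `lab i` of the step from `seq i` to `seq (i+1)`.  For a vertex
`v ∈ V'`, the set `S_v` of steps that are a deletion or an introduction of a pair
containing `v` satisfies `|S_v| ≤ 2n`. -/
theorem stmt7 {V : Type} [Fintype V] [DecidableEq V] (G : SimpleGraph V) (V1 V2 : Set V)
    (hcover : V1 ∪ V2 = Set.univ) (hdisj : Disjoint V1 V2)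
    (hbip : ∀ ⦃u w : V⦄, G.Adj u w → (u ∈ V1 ∧ w ∈ V2) ∨ (u ∈ V2 ∧ w ∈ V1))
    (D : Set ℕ) (hD : ∀ ⦃i j : ℕ⦄, i ≤ j → j ∈ D → i ∈ D)
    (seq : ℕ → AlgState (Vext V)) (lab : ℕ → Vext V × Option (Vext V))
    (h0 : seq 0 = initState vzero vone)
    (hstep : ∀ i ∈ D, LStep (extGraph G V1) (lab i) (seq i) (seq (i + 1)))
    (v : Vext V) :
    {i ∈ D | PairContains (lab i) v}.Finite ∧
    {i ∈ D | PairContains (lab i) v}.ncard ≤ 2 * Fintype.card (Vext V) := by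
  classical
  have hne01 : (vone : Vext V) ≠ vzero := by simp [vzero, vone]
  have hadj01 : (extGraph G V1).Adj vone vzero := trivial
  refine Stmt7Aux.main_bound D seq lab
    (φ := fun x => match x with
      | none => false
      | some none => true
      | some (some u) => if u ∈ V1 then false else true)
    ?_ hne01 hadj01 hD h0 hstep v
  rintro (_ | (_ | u)) (_ | (_ | w)) h
  · exact h.elim
  · rfl
  · exact h.elim
  · rfl
  · exact h.elim
  · have hw : w ∈ V1 := h
    simp [hw]
  · exact h.elim
  · have hu : u ∈ V1 := h
    simp [hu]
  · have hadj : G.Adj u w := h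
    rcases hbip hadj with ⟨hu1, hw2⟩ | ⟨hu2, hw1⟩
    · have hw1 : w ∉ V1 := Set.disjoint_right.mp hdisj hw2
      simp [hu1, hw1]
    · have hu1 : u ∉ V1 := Set.disjoint_right.mp hdisj hu2
      simp [hw1, hu1]
end

section
/- Let n be the number of vertices of G'. Every execution of the transition system starting from the initial state performs at most 2n² + 1 steps; in particular every execution is finite and the algorithm terminates after O(n²) iterations. -/
section UVGTermination

open Finset

variable {W : Type} [DecidableEq W] [Fintype W]

/-- Colour of the head of the (reversed) path. -/
def uvgHcol (c : W → Bool) : List W → Bool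
  | [] => true
  | v :: _ => c v

/-- Vertices outside the path with `σ = τ = ⊥`. -/
def uvgFresh (s : AlgState W) : Finset W :=
  Finset.univ.filter fun u => u ∉ s.P ∧ s.σ u = none ∧ s.τ u = none

/-- Available endpoints of matched pairs outside the path whose colour differs
from the colour of the head of the path. -/
def uvgAvail (c : W → Bool) (s : AlgState W) : Finset W :=
  Finset.univ.filter fun u =>
    u ∉ s.P ∧ s.σ u = none ∧ s.τ u ≠ none ∧ c u ≠ uvgHcol c s.P

/-- The potential function. -/
def uvgPot (c : W → Bool) (s : AlgState W) : ℕ :=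
  if s.P.length ≤ 1 then 0
  else 2 * Fintype.card W * (uvgFresh s).card + 4 * (uvgAvail c s).card + s.P.length

lemma mem_uvgFresh {s : AlgState W} {u : W} :
    u ∈ uvgFresh s ↔ u ∉ s.P ∧ s.σ u = none ∧ s.τ u = none := by
  simp [uvgFresh]

lemma mem_uvgAvail {c : W → Bool} {s : AlgState W} {u : W} :
    u ∈ uvgAvail c s ↔
      u ∉ s.P ∧ s.σ u = none ∧ s.τ u ≠ none ∧ c u ≠ uvgHcol c s.P := by
  simp [uvgAvail]

/-- The structural invariant maintained by the transition system. -/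
structure UVGInv (G' : SimpleGraph W) (s : AlgState W) : Prop where
  chain : s.P.Chain' G'.Adj
  nodup : s.P.Nodup
  adjσ : ∀ x y, s.σ x = some y → G'.Adj x y
  adjτ : ∀ x y, s.τ x = some y → G'.Adj x y
  pair1 : ∀ x, x ∉ s.P → ∀ y, s.σ x = some y →
      y ∉ s.P ∧ s.τ y = some x ∧ s.σ y = none ∧ s.τ x = none
  pair2 : ∀ x, x ∉ s.P → ∀ y, s.τ x = some y →
      y ∉ s.P ∧ s.σ y = some x ∧ s.τ y = none ∧ s.σ x = none

/-- Counting bound: available endpoints come in (injective) pairs disjoint from the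
fresh vertices and from the path. -/
lemma uvg_card_bound {G' : SimpleGraph W} (c : W → Bool) {s : AlgState W}
    (h : UVGInv G' s) :
    2 * (uvgAvail c s).card + (uvgFresh s).card + s.P.length ≤ Fintype.card W := by
  classical
  set f : W → W := fun u => (s.τ u).getD u with hfdef
  have hfp : ∀ u ∈ uvgAvail c s,
      s.τ u = some (f u) ∧ f u ∉ s.P ∧ s.σ (f u) = some u ∧ s.τ (f u) = none := by
    intro u hu
    rw [mem_uvgAvail] at hu
    obtain ⟨hP, hσ, hτ, -⟩ := hu
    obtain ⟨w, hw⟩ := Option.ne_none_iff_exists'.mp hτ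
    have h2 := h.pair2 u hP w hw
    have hfu : f u = w := by simp [hfdef, hw]
    rw [hfu]
    exact ⟨hw, h2.1, h2.2.1, h2.2.2.1⟩
  have hinj : Set.InjOn f (uvgAvail c s) := by
    intro a ha b hb hab
    have h1 := (hfp a ha).2.2.1
    have h2 := (hfp b hb).2.2.1
    rw [hab, h2] at h1
    exact (Option.some_inj.mp h1).symm
  have hcard_img : ((uvgAvail c s).image f).card = (uvgAvail c s).card :=
    Finset.card_image_of_injOn hinj
  have hd1 : Disjoint (uvgAvail c s) ((uvgAvail c s).image f) := by
    rw [Finset.disjoint_left]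
    intro a ha hb
    obtain ⟨u, hu, rfl⟩ := Finset.mem_image.mp hb
    have h1 := (hfp u hu).2.2.1
    have h2 := (mem_uvgAvail.mp ha).2.1
    rw [h2] at h1
    exact nomatch h1
  have hd2 : Disjoint (uvgAvail c s ∪ (uvgAvail c s).image f) (uvgFresh s) := by
    rw [Finset.disjoint_left]
    intro a ha hb
    rw [mem_uvgFresh] at hb
    rcases Finset.mem_union.mp ha with ha | ha
    · exact (mem_uvgAvail.mp ha).2.2.1 hb.2.2
    · obtain ⟨u, hu, rfl⟩ := Finset.mem_image.mp ha
      have h1 := (hfp u hu).2.2.1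
      rw [hb.2.1] at h1
      exact nomatch h1
  have hd3 : Disjoint (uvgAvail c s ∪ (uvgAvail c s).image f ∪ uvgFresh s)
      s.P.toFinset := by
    rw [Finset.disjoint_left]
    intro a ha hb
    rw [List.mem_toFinset] at hb
    rcases Finset.mem_union.mp ha with ha | ha
    · rcases Finset.mem_union.mp ha with ha | ha
      · exact (mem_uvgAvail.mp ha).1 hb
      · obtain ⟨u, hu, rfl⟩ := Finset.mem_image.mp ha
        exact (hfp u hu).2.1 hb
    · exact (mem_uvgFresh.mp ha).1 hb
  have hQ : s.P.toFinset.card = s.P.length := List.toFinset_card_of_nodup h.nodup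
  have := Finset.card_le_univ
    (uvgAvail c s ∪ (uvgAvail c s).image f ∪ uvgFresh s ∪ s.P.toFinset)
  rw [Finset.card_union_of_disjoint hd3, Finset.card_union_of_disjoint hd2,
    Finset.card_union_of_disjoint hd1, hcard_img, hQ] at this
  omega

end UVGTermination
section UVGTermination2

open Finset

variable {W : Type} [DecidableEq W] [Fintype W]

lemma uvg_step_main {G' : SimpleGraph W} (c : W → Bool)
    (hc : ∀ ⦃x y⦄, G'.Adj x y → c y = !c x)
    {l : W × Option W} {s s' : AlgState W}
    (hinv : UVGInv G' s) (h : LStep G' l s s') :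
    UVGInv G' s' ∧ uvgPot c s' < uvgPot c s := by
  classical
  obtain ⟨hch, hnd, haσ, haτ, hp1, hp2⟩ := hinv
  cases h with
  | del vk vk1 rest R σ τ hZ =>
    have hadj01 : G'.Adj vk vk1 := (List.isChain_cons_cons.mp hch).1
    have hch1 : List.Chain' G'.Adj (vk1 :: rest) := (List.isChain_cons_cons.mp hch).2
    have hchr : List.Chain' G'.Adj rest := hch1.tail
    have hne : vk ≠ vk1 := G'.ne_of_adj hadj01
    have hnotvk : vk ∉ vk1 :: rest := (List.nodup_cons.mp hnd).1
    have hndr1 : (vk1 :: rest).Nodup := (List.nodup_cons.mp hnd).2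
    have hvk1r : vk1 ∉ rest := (List.nodup_cons.mp hndr1).1
    have hndr : rest.Nodup := (List.nodup_cons.mp hndr1).2
    have hvkr : vk ∉ rest := fun hh => hnotvk (List.mem_cons_of_mem _ hh)
    set σ' := Function.update (Function.update σ vk1 (some vk)) vk none with hσ'def
    set τ' := Function.update (Function.update τ vk (some vk1)) vk1 none with hτ'def
    have hσ'vk : σ' vk = none := by simp [hσ'def]
    have hσ'vk1 : σ' vk1 = some vk := by
      simp [hσ'def, Function.update_apply, Ne.symm hne]
    have hσ'o : ∀ x, x ≠ vk → x ≠ vk1 → σ' x = σ x := by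
      intro x h1 h2; simp [hσ'def, Function.update_apply, h1, h2]
    have hτ'vk1 : τ' vk1 = none := by simp [hτ'def]
    have hτ'vk : τ' vk = some vk1 := by
      simp [hτ'def, Function.update_apply, hne]
    have hτ'o : ∀ x, x ≠ vk → x ≠ vk1 → τ' x = τ x := by
      intro x h1 h2; simp [hτ'def, Function.update_apply, h1, h2]
    have hinv' : UVGInv G' (⟨rest, R, σ', τ'⟩ : AlgState W) := by
      refine ⟨hchr, hndr, ?_, ?_, ?_, ?_⟩
      · intro x y hxy
        replace hxy : σ' x = some y := hxy
        by_cases h1 : x = vk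
        · subst h1; rw [hσ'vk] at hxy; exact nomatch hxy
        by_cases h2 : x = vk1
        · subst h2; rw [hσ'vk1] at hxy
          obtain rfl : vk = y := Option.some_inj.mp hxy
          exact hadj01.symm
        · rw [hσ'o x h1 h2] at hxy; exact haσ x y hxy
      · intro x y hxy
        replace hxy : τ' x = some y := hxy
        by_cases h1 : x = vk
        · subst h1; rw [hτ'vk] at hxy
          obtain rfl : vk1 = y := Option.some_inj.mp hxy
          exact hadj01
        by_cases h2 : x = vk1
        · subst h2; rw [hτ'vk1] at hxy; exact nomatch hxy
        · rw [hτ'o x h1 h2] at hxy; exact haτ x y hxy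
      · intro x hx y hxy
        replace hx : x ∉ rest := hx
        replace hxy : σ' x = some y := hxy
        by_cases h1 : x = vk
        · subst h1; rw [hσ'vk] at hxy; exact nomatch hxy
        by_cases h2 : x = vk1
        · subst h2; rw [hσ'vk1] at hxy
          obtain rfl : vk = y := Option.some_inj.mp hxy
          exact ⟨hvkr, hτ'vk, hσ'vk, hτ'vk1⟩
        · rw [hσ'o x h1 h2] at hxy
          have hxP : x ∉ vk :: vk1 :: rest := by
            simp only [List.mem_cons, not_or]; exact ⟨h1, h2, hx⟩
          obtain ⟨hyP, ht, hs, ht2⟩ := hp1 x hxP y hxy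
          simp only [List.mem_cons, not_or] at hyP
          obtain ⟨hy1, hy2, hy3⟩ := hyP
          exact ⟨hy3, (hτ'o y hy1 hy2).trans ht,
            (hσ'o y hy1 hy2).trans hs, (hτ'o x h1 h2).trans ht2⟩
      · intro x hx y hxy
        replace hx : x ∉ rest := hx
        replace hxy : τ' x = some y := hxy
        by_cases h1 : x = vk
        · subst h1; rw [hτ'vk] at hxy
          obtain rfl : vk1 = y := Option.some_inj.mp hxy
          exact ⟨hvk1r, hσ'vk1, hτ'vk1, hσ'vk⟩
        by_cases h2 : x = vk1
        · subst h2; rw [hτ'vk1] at hxy; exact nomatch hxy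
        · rw [hτ'o x h1 h2] at hxy
          have hxP : x ∉ vk :: vk1 :: rest := by
            simp only [List.mem_cons, not_or]; exact ⟨h1, h2, hx⟩
          obtain ⟨hyP, hs, ht, hs2⟩ := hp2 x hxP y hxy
          simp only [List.mem_cons, not_or] at hyP
          obtain ⟨hy1, hy2, hy3⟩ := hyP
          exact ⟨hy3, (hσ'o y hy1 hy2).trans hs,
            (hτ'o y hy1 hy2).trans ht, (hσ'o x h1 h2).trans hs2⟩
    refine ⟨hinv', ?_⟩
    by_cases hrl : rest.length ≤ 1
    · simp only [uvgPot, List.length_cons]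
      rw [if_pos (hrl : rest.length ≤ 1),
        if_neg (by simp : ¬ (rest.length + 1 + 1 ≤ 1))]
      exact Nat.lt_of_lt_of_le (by omega) (Nat.le_add_left _ _)
    · obtain ⟨hd, rest', rfl⟩ : ∃ hd rest', rest = hd :: rest' := by
        cases rest with
        | nil => simp at hrl
        | cons a t => exact ⟨a, t, rfl⟩
      have hadj12 : G'.Adj vk1 hd := (List.isChain_cons_cons.mp hch1).1
      have hchd : c hd = c vk := by rw [hc hadj12, hc hadj01, Bool.not_not]
      have hFsub : uvgFresh (⟨hd :: rest', R, σ', τ'⟩ : AlgState W) ⊆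
          uvgFresh ⟨vk :: vk1 :: hd :: rest', R, σ, τ⟩ := by
        intro u hu
        rw [mem_uvgFresh] at hu ⊢
        obtain ⟨huP, huσ, huτ⟩ := hu
        replace huP : u ∉ hd :: rest' := huP
        replace huσ : σ' u = none := huσ
        replace huτ : τ' u = none := huτ
        have h1 : u ≠ vk := by
          intro hh; rw [hh, hτ'vk] at huτ; exact nomatch huτ
        have h2 : u ≠ vk1 := by
          intro hh; rw [hh, hσ'vk1] at huσ; exact nomatch huσ
        rw [hσ'o u h1 h2] at huσ
        rw [hτ'o u h1 h2] at huτ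
        refine ⟨?_, huσ, huτ⟩
        simp only [List.mem_cons, not_or] at huP ⊢
        exact ⟨h1, h2, huP⟩
      have hAsub : uvgAvail c (⟨hd :: rest', R, σ', τ'⟩ : AlgState W) ⊆
          uvgAvail c ⟨vk :: vk1 :: hd :: rest', R, σ, τ⟩ := by
        intro u hu
        rw [mem_uvgAvail] at hu ⊢
        obtain ⟨huP, huσ, huτ, huc⟩ := hu
        replace huP : u ∉ hd :: rest' := huP
        replace huσ : σ' u = none := huσ
        replace huτ : τ' u ≠ none := huτ
        replace huc : c u ≠ uvgHcol c (hd :: rest') := huc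
        have h1 : u ≠ vk := by
          intro hh
          exact huc (hh ▸ hchd.symm)
        have h2 : u ≠ vk1 := by
          intro hh; rw [hh, hσ'vk1] at huσ; exact nomatch huσ
        rw [hσ'o u h1 h2] at huσ
        rw [hτ'o u h1 h2] at huτ
        refine ⟨?_, huσ, huτ, fun hh => huc (hh.trans hchd.symm)⟩
        simp only [List.mem_cons, not_or] at huP ⊢
        exact ⟨h1, h2, huP⟩
      have hF := Finset.card_le_card hFsub
      have hA := Finset.card_le_card hAsub
      simp only [List.length_cons] at hrl
      simp only [uvgPot, List.length_cons]
      rw [if_neg (by omega : ¬ (rest'.length + 1 + 1 + 1 ≤ 1)),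
        if_neg (by omega : ¬ (rest'.length + 1 ≤ 1))]
      calc 2 * Fintype.card W *
              (uvgFresh (⟨hd :: rest', R, σ', τ'⟩ : AlgState W)).card
            + 4 * (uvgAvail c (⟨hd :: rest', R, σ', τ'⟩ : AlgState W)).card
            + (rest'.length + 1)
          ≤ 2 * Fintype.card W *
              (uvgFresh (⟨vk :: vk1 :: hd :: rest', R, σ, τ⟩ : AlgState W)).card
            + 4 * (uvgAvail c (⟨vk :: vk1 :: hd :: rest', R, σ, τ⟩ : AlgState W)).card
            + (rest'.length + 1) := by gcongr
        _ < 2 * Fintype.card W *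
              (uvgFresh (⟨vk :: vk1 :: hd :: rest', R, σ, τ⟩ : AlgState W)).card
            + 4 * (uvgAvail c (⟨vk :: vk1 :: hd :: rest', R, σ, τ⟩ : AlgState W)).card
            + (rest'.length + 1 + 1 + 1) := by
            exact Nat.add_lt_add_left (by omega) _
  | intro_bot vk rest R σ τ z hrest hz hadj hσz hτz =>
    have hinv' : UVGInv G' (⟨z :: vk :: rest, insert z R, σ, τ⟩ : AlgState W) := by
      refine ⟨List.isChain_cons_cons.mpr ⟨hadj, hch⟩, List.nodup_cons.mpr ⟨hz, hnd⟩,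
        haσ, haτ, ?_, ?_⟩
      · intro x hx y hxy
        have hx' : x ∉ vk :: rest := fun hh => hx (List.mem_cons_of_mem _ hh)
        obtain ⟨hyP, ht, hs, ht2⟩ := hp1 x hx' y hxy
        replace hyP : y ∉ vk :: rest := hyP
        replace ht : τ y = some x := ht
        replace hs : σ y = none := hs
        replace ht2 : τ x = none := ht2
        have hyz : y ≠ z := by
          intro hh; rw [hh, hτz] at ht; exact nomatch ht
        refine ⟨?_, ht, hs, ht2⟩
        simp only [List.mem_cons, not_or] at hyP ⊢
        exact ⟨hyz, hyP⟩
      · intro x hx y hxy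
        have hx' : x ∉ vk :: rest := fun hh => hx (List.mem_cons_of_mem _ hh)
        obtain ⟨hyP, hs, ht, hs2⟩ := hp2 x hx' y hxy
        replace hyP : y ∉ vk :: rest := hyP
        replace hs : σ y = some x := hs
        replace ht : τ y = none := ht
        replace hs2 : σ x = none := hs2
        have hyz : y ≠ z := by
          intro hh; rw [hh, hσz] at hs; exact nomatch hs
        refine ⟨?_, hs, ht, hs2⟩
        simp only [List.mem_cons, not_or] at hyP ⊢
        exact ⟨hyz, hyP⟩
    refine ⟨hinv', ?_⟩
    have hrlen : 1 ≤ rest.length := List.length_pos_iff.mpr hrest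
    have hzF : z ∈ uvgFresh (⟨vk :: rest, R, σ, τ⟩ : AlgState W) := by
      rw [mem_uvgFresh]; exact ⟨hz, hσz, hτz⟩
    have hFsub : uvgFresh (⟨z :: vk :: rest, insert z R, σ, τ⟩ : AlgState W) ⊆
        uvgFresh ⟨vk :: rest, R, σ, τ⟩ := by
      intro u hu
      rw [mem_uvgFresh] at hu ⊢
      exact ⟨fun hh => hu.1 (List.mem_cons_of_mem _ hh), hu.2.1, hu.2.2⟩
    have hzF' : z ∉ uvgFresh (⟨z :: vk :: rest, insert z R, σ, τ⟩ : AlgState W) := by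
      rw [mem_uvgFresh]
      intro hh
      exact hh.1 (List.mem_cons_self)
    have hFlt : (uvgFresh (⟨z :: vk :: rest, insert z R, σ, τ⟩ : AlgState W)).card + 1 ≤
        (uvgFresh (⟨vk :: rest, R, σ, τ⟩ : AlgState W)).card := by
      have hsub : insert z (uvgFresh (⟨z :: vk :: rest, insert z R, σ, τ⟩ : AlgState W)) ⊆
          uvgFresh (⟨vk :: rest, R, σ, τ⟩ : AlgState W) := by
        intro u hu
        rcases Finset.mem_insert.mp hu with rfl | hu
        · exact hzF
        · exact hFsub hu
      have := Finset.card_le_card hsub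
      rwa [Finset.card_insert_of_notMem hzF'] at this
    have hbound := uvg_card_bound c hinv'
    simp only [List.length_cons] at hbound
    simp only [uvgPot, List.length_cons]
    rw [if_neg (by omega : ¬ (rest.length + 1 + 1 ≤ 1)),
      if_neg (by omega : ¬ (rest.length + 1 ≤ 1))]
    set n := Fintype.card W
    set f' := (uvgFresh (⟨z :: vk :: rest, insert z R, σ, τ⟩ : AlgState W)).card
    set a' := (uvgAvail c (⟨z :: vk :: rest, insert z R, σ, τ⟩ : AlgState W)).card
    set f := (uvgFresh (⟨vk :: rest, R, σ, τ⟩ : AlgState W)).card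
    set a := (uvgAvail c (⟨vk :: rest, R, σ, τ⟩ : AlgState W)).card
    set rl := rest.length
    have key : 2*n*f' + 4*a' + (rl + 1 + 1) + (2*f' + rl + 2) ≤ 2*n*f + 4*a + (rl + 1) := by
      calc 2*n*f' + 4*a' + (rl + 1 + 1) + (2*f' + rl + 2)
          = 2*n*f' + 2*(2*a' + f' + (rl + 1 + 1)) := by ring
        _ ≤ 2*n*f' + 2*n := Nat.add_le_add_left (Nat.mul_le_mul_left 2 hbound) _
        _ = 2*n*(f' + 1) := by ring
        _ ≤ 2*n*f := Nat.mul_le_mul_left _ hFlt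
        _ ≤ 2*n*f + (4*a + (rl + 1)) := Nat.le_add_right _ _
        _ = 2*n*f + 4*a + (rl + 1) := by ring
    exact Nat.lt_of_lt_of_le (Nat.lt_add_of_pos_right (by omega)) key
  | intro_pair vk rest R σ τ z w hrest hz hadj hσz hτz =>
    obtain ⟨hwP, hσw, hτw, -⟩ := hp2 z hz w hτz
    replace hwP : w ∉ vk :: rest := hwP
    replace hσw : σ w = some z := hσw
    replace hτw : τ w = none := hτw
    have hwz : w ≠ z := by
      intro hh; rw [hh, hσz] at hσw; exact nomatch hσw
    have hadjzw : G'.Adj z w := haτ z w hτz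
    have hinv' : UVGInv G' (⟨w :: z :: vk :: rest, insert z R, σ, τ⟩ : AlgState W) := by
      refine ⟨List.isChain_cons_cons.mpr ⟨hadjzw.symm, List.isChain_cons_cons.mpr ⟨hadj, hch⟩⟩,
        List.nodup_cons.mpr ⟨?_, List.nodup_cons.mpr ⟨hz, hnd⟩⟩, haσ, haτ, ?_, ?_⟩
      · simp only [List.mem_cons, not_or]
        simp only [List.mem_cons, not_or] at hwP
        exact ⟨hwz, hwP⟩
      · intro x hx y hxy
        simp only [List.mem_cons, not_or] at hx
        obtain ⟨hxw, hxz, hxP⟩ := hx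
        have hx' : x ∉ vk :: rest := by
          simp only [List.mem_cons, not_or]; exact hxP
        obtain ⟨hyP, ht, hs, ht2⟩ := hp1 x hx' y hxy
        replace hyP : y ∉ vk :: rest := hyP
        replace ht : τ y = some x := ht
        replace hs : σ y = none := hs
        replace ht2 : τ x = none := ht2
        have hyz : y ≠ z := by
          intro hh; rw [hh, hτz] at ht
          exact hxw (Option.some_inj.mp ht).symm
        have hyw : y ≠ w := by
          intro hh; rw [hh, hτw] at ht; exact nomatch ht
        refine ⟨?_, ht, hs, ht2⟩
        simp only [List.mem_cons, not_or] at hyP ⊢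
        exact ⟨hyw, hyz, hyP⟩
      · intro x hx y hxy
        simp only [List.mem_cons, not_or] at hx
        obtain ⟨hxw, hxz, hxP⟩ := hx
        have hx' : x ∉ vk :: rest := by
          simp only [List.mem_cons, not_or]; exact hxP
        obtain ⟨hyP, hs, ht, hs2⟩ := hp2 x hx' y hxy
        replace hyP : y ∉ vk :: rest := hyP
        replace hs : σ y = some x := hs
        replace ht : τ y = none := ht
        replace hs2 : σ x = none := hs2
        have hyz : y ≠ z := by
          intro hh; rw [hh, hσz] at hs; exact nomatch hs
        have hyw : y ≠ w := by
          intro hh; rw [hh, hσw] at hs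
          exact hxz (Option.some_inj.mp hs).symm
        refine ⟨?_, hs, ht, hs2⟩
        simp only [List.mem_cons, not_or] at hyP ⊢
        exact ⟨hyw, hyz, hyP⟩
    refine ⟨hinv', ?_⟩
    have hrlen : 1 ≤ rest.length := List.length_pos_iff.mpr hrest
    have hcw : c w = c vk := (hc hadjzw).trans (hc hadj).symm
    have hzA : z ∈ uvgAvail c (⟨vk :: rest, R, σ, τ⟩ : AlgState W) := by
      rw [mem_uvgAvail]
      refine ⟨hz, hσz, by show τ z ≠ none; rw [hτz]; simp, ?_⟩
      intro hh
      replace hh : c z = c vk := hh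
      rw [hc hadj] at hh
      simp at hh
    have hAsub : uvgAvail c (⟨w :: z :: vk :: rest, insert z R, σ, τ⟩ : AlgState W) ⊆
        uvgAvail c ⟨vk :: rest, R, σ, τ⟩ := by
      intro u hu
      rw [mem_uvgAvail] at hu ⊢
      obtain ⟨huP, huσ, huτ, huc⟩ := hu
      simp only [List.mem_cons, not_or] at huP
      refine ⟨?_, huσ, huτ, fun hh => huc (hh.trans hcw.symm)⟩
      simp only [List.mem_cons, not_or]
      exact huP.2.2
    have hzA' : z ∉ uvgAvail c (⟨w :: z :: vk :: rest, insert z R, σ, τ⟩ : AlgState W) := by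
      rw [mem_uvgAvail]
      intro hh
      exact hh.1 (List.mem_cons_of_mem _ (List.mem_cons_self))
    have hAlt : (uvgAvail c (⟨w :: z :: vk :: rest, insert z R, σ, τ⟩ : AlgState W)).card + 1 ≤
        (uvgAvail c (⟨vk :: rest, R, σ, τ⟩ : AlgState W)).card := by
      have hsub : insert z (uvgAvail c (⟨w :: z :: vk :: rest, insert z R, σ, τ⟩ : AlgState W)) ⊆
          uvgAvail c (⟨vk :: rest, R, σ, τ⟩ : AlgState W) := by
        intro u hu
        rcases Finset.mem_insert.mp hu with rfl | hu
        · exact hzA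
        · exact hAsub hu
      have := Finset.card_le_card hsub
      rwa [Finset.card_insert_of_notMem hzA'] at this
    have hFsub : uvgFresh (⟨w :: z :: vk :: rest, insert z R, σ, τ⟩ : AlgState W) ⊆
        uvgFresh ⟨vk :: rest, R, σ, τ⟩ := by
      intro u hu
      rw [mem_uvgFresh] at hu ⊢
      obtain ⟨huP, huσ, huτ⟩ := hu
      simp only [List.mem_cons, not_or] at huP
      refine ⟨?_, huσ, huτ⟩
      simp only [List.mem_cons, not_or]
      exact huP.2.2
    have hF := Finset.card_le_card hFsub
    simp only [uvgPot, List.length_cons]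
    rw [if_neg (by omega : ¬ (rest.length + 1 + 1 + 1 ≤ 1)),
      if_neg (by omega : ¬ (rest.length + 1 ≤ 1))]
    set n := Fintype.card W
    set f' := (uvgFresh (⟨w :: z :: vk :: rest, insert z R, σ, τ⟩ : AlgState W)).card
    set a' := (uvgAvail c (⟨w :: z :: vk :: rest, insert z R, σ, τ⟩ : AlgState W)).card
    set f := (uvgFresh (⟨vk :: rest, R, σ, τ⟩ : AlgState W)).card
    set a := (uvgAvail c (⟨vk :: rest, R, σ, τ⟩ : AlgState W)).card
    set rl := rest.length
    calc 2*n*f' + 4*a' + (rl + 1 + 1 + 1)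
        ≤ 2*n*f + 4*a' + (rl + 1 + 1 + 1) := by gcongr
      _ < 2*n*f + 4*a' + (rl + 1 + 1 + 1 + 2) := Nat.add_lt_add_left (by omega) _
      _ = 2*n*f + (4*(a' + 1) + (rl + 1)) := by ring
      _ ≤ 2*n*f + (4*a + (rl + 1)) :=
          Nat.add_le_add_left (Nat.add_le_add_right (Nat.mul_le_mul_left 4 hAlt) _) _
      _ = 2*n*f + 4*a + (rl + 1) := by ring

end UVGTermination2
section UVGColour

open Classical in
/-- A proper 2-colouring of `G'`. -/
noncomputable def uvgCol {V : Type} (V1 : Set V) : Vext V → Bool := fun x =>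
  match x with
  | none => false
  | some none => true
  | some (some v) => if v ∈ V1 then false else true

lemma uvgCol_adj {V : Type} (G : SimpleGraph V) (V1 V2 : Set V)
    (hdisj : Disjoint V1 V2)
    (hbip : ∀ ⦃u w : V⦄, G.Adj u w → (u ∈ V1 ∧ w ∈ V2) ∨ (u ∈ V2 ∧ w ∈ V1)) :
    ∀ ⦃x y : Vext V⦄, (extGraph G V1).Adj x y → uvgCol V1 y = !uvgCol V1 x := by
  classical
  rintro (_ | (_ | u)) (_ | (_ | v)) h
  · exact h.elim
  · simp [uvgCol]
  · exact h.elim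
  · simp [uvgCol]
  · exact h.elim
  · have hv : v ∈ V1 := h
    simp [uvgCol, hv]
  · exact h.elim
  · have hu : u ∈ V1 := h
    simp [uvgCol, hu]
  · have hadj : G.Adj u v := h
    rcases hbip hadj with ⟨hu, hv⟩ | ⟨hu, hv⟩
    · have hv' : v ∉ V1 := fun hh => (Set.disjoint_left.mp hdisj hh) hv
      simp [uvgCol, hu, hv']
    · have hu' : u ∉ V1 := fun hh => (Set.disjoint_left.mp hdisj hh) hu
      simp [uvgCol, hv, hu']

lemma uvg_inv_init {V : Type} (G : SimpleGraph V) (V1 : Set V) :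
    UVGInv (extGraph G V1) (initState (vzero : Vext V) vone) := by
  refine ⟨?_, ?_, ?_, ?_, ?_, ?_⟩
  · show List.IsChain (extGraph G V1).Adj [vone, vzero]
    rw [List.isChain_cons_cons]
    exact ⟨trivial, List.isChain_singleton _⟩
  · show List.Nodup [vone, vzero]
    simp [vone, vzero]
  · intro x y hxy; exact nomatch hxy
  · intro x y hxy; exact nomatch hxy
  · intro x _ y hxy; exact nomatch hxy
  · intro x _ y hxy; exact nomatch hxy

end UVGColour
lemma uvg_src_len {W : Type} [DecidableEq W] {G' : SimpleGraph W} {l : W × Option W}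
    {s s' : AlgState W} (h : LStep G' l s s') : 2 ≤ s.P.length := by
  cases h with
  | del vk vk1 rest R σ τ hZ =>
    show 2 ≤ (vk :: vk1 :: rest).length
    simp
  | intro_bot vk rest R σ τ z hrest hz hadj hσ hτ =>
    show 2 ≤ (vk :: rest).length
    have := List.length_pos_iff.mpr hrest
    simp only [List.length_cons]
    omega
  | intro_pair vk rest R σ τ z w hrest hz hadj hσ hτ =>
    show 2 ≤ (vk :: rest).length
    have := List.length_pos_iff.mpr hrest
    simp only [List.length_cons]
    omega

theorem stmt8' {V : Type} [Fintype V] [DecidableEq V] (G : SimpleGraph V) (V1 V2 : Set V)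
    (hcover : V1 ∪ V2 = Set.univ) (hdisj : Disjoint V1 V2)
    (hbip : ∀ ⦃u w : V⦄, G.Adj u w → (u ∈ V1 ∧ w ∈ V2) ∨ (u ∈ V2 ∧ w ∈ V1))
    (D : Set ℕ) (hD : ∀ ⦃i j : ℕ⦄, i ≤ j → j ∈ D → i ∈ D)
    (seq : ℕ → AlgState (Vext V))
    (h0 : seq 0 = initState vzero vone)
    (hstep : ∀ i ∈ D, Step (extGraph G V1) (seq i) (seq (i + 1))) :
    D.Finite ∧ D.ncard ≤ 2 * Fintype.card (Vext V) ^ 2 + 1 := by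
  classical
  have hc := uvgCol_adj G V1 V2 hdisj hbip
  set c := uvgCol V1 with hcdef
  have key : ∀ i, i ∈ D →
      UVGInv (extGraph G V1) (seq i) ∧ uvgPot c (seq i) + i ≤ uvgPot c (seq 0) := by
    intro i
    induction i with
    | zero =>
      intro _
      refine ⟨?_, by omega⟩
      rw [h0]
      exact uvg_inv_init G V1
    | succ i ih =>
      intro hiD
      have hi : i ∈ D := hD (Nat.le_succ i) hiD
      obtain ⟨hinv, hpot⟩ := ih hi
      obtain ⟨l, hl⟩ := hstep i hi
      obtain ⟨hinv', hdec⟩ := uvg_step_main c hc hinv hl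
      exact ⟨hinv', by omega⟩
  have hpot0 : uvgPot c (seq 0) ≤ 2 * Fintype.card (Vext V) ^ 2 + 2 := by
    rw [h0]
    have hA0 : uvgAvail c (initState (vzero : Vext V) vone) = ∅ := by
      ext u
      simp [uvgAvail, initState]
    have hF0 : (uvgFresh (initState (vzero : Vext V) vone)).card ≤ Fintype.card (Vext V) :=
      Finset.card_le_univ _
    have h1 : 2 * Fintype.card (Vext V) * (uvgFresh (initState (vzero : Vext V) vone)).card ≤
        2 * Fintype.card (Vext V) * Fintype.card (Vext V) :=
      Nat.mul_le_mul_left _ hF0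
    have h2 : 2 * Fintype.card (Vext V) * Fintype.card (Vext V) =
        2 * Fintype.card (Vext V) ^ 2 := by ring
    have h3 : (initState (vzero : Vext V) vone).P.length = 2 := by simp [initState]
    simp only [uvgPot]
    rw [if_neg (by simp [initState])]
    rw [hA0, Finset.card_empty, h3]
    simp only [Nat.mul_zero, Nat.add_zero]
    exact Nat.add_le_add_right (h1.trans (le_of_eq h2)) 2
  have hmem : ∀ i ∈ D, i < 2 * Fintype.card (Vext V) ^ 2 + 1 := by
    intro i hi
    obtain ⟨hinv, hpot⟩ := key i hi
    obtain ⟨l, hl⟩ := hstep i hi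
    have hlen : 2 ≤ (seq i).P.length := uvg_src_len hl
    have hpos : 2 ≤ uvgPot c (seq i) := by
      simp only [uvgPot]
      rw [if_neg (by omega)]
      exact le_trans hlen (Nat.le_add_left _ _)
    omega
  have hsub : D ⊆ ↑(Finset.range (2 * Fintype.card (Vext V) ^ 2 + 1)) := by
    intro i hi
    simp only [Finset.coe_range, Set.mem_Iio]
    exact hmem i hi
  constructor
  · exact Set.Finite.subset (Finset.range _).finite_toSet hsub
  · calc D.ncard ≤ (↑(Finset.range (2 * Fintype.card (Vext V) ^ 2 + 1)) : Set ℕ).ncard :=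
        Set.ncard_le_ncard hsub (Finset.finite_toSet _)
      _ = 2 * Fintype.card (Vext V) ^ 2 + 1 := by
        rw [Set.ncard_coe_finset, Finset.card_range]

/-- Proposition 4 (upper bound): let `n` be the number of vertices of `G'`.  Every
execution of the transition system starting from the initial state — given by its
downward-closed set `D ⊆ ℕ` of step indices — performs at most `2n² + 1` steps; in
particular every execution is finite and the algorithm terminates after `O(n²)`
iterations. -/
theorem stmt8 {V : Type} [Fintype V] [DecidableEq V] (G : SimpleGraph V) (V1 V2 : Set V)
    (hcover : V1 ∪ V2 = Set.univ) (hdisj : Disjoint V1 V2)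
    (hbip : ∀ ⦃u w : V⦄, G.Adj u w → (u ∈ V1 ∧ w ∈ V2) ∨ (u ∈ V2 ∧ w ∈ V1))
    (D : Set ℕ) (hD : ∀ ⦃i j : ℕ⦄, i ≤ j → j ∈ D → i ∈ D)
    (seq : ℕ → AlgState (Vext V))
    (h0 : seq 0 = initState vzero vone)
    (hstep : ∀ i ∈ D, Step (extGraph G V1) (seq i) (seq (i + 1))) :
    D.Finite ∧ D.ncard ≤ 2 * Fintype.card (Vext V) ^ 2 + 1 := by
  exact stmt8' G V1 V2 hcover hdisj hbip D hD seq h0 hstep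
end
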